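/- arXiv:2305.16446 — 6 statements merged into one kernel-verified Lean document; each statement's English description precedes it below -/
import Mathlib

section
/- Let ρ and σ be n×n real symmetric positive semidefinite matrices with trace 1. Then the quantum Jensen–Shannon divergence is bounded below by one eighth of the squared trace norm of their difference: S((ρ+σ)/2) − (1/2)(S(ρ) + S(σ)) ≥ (1/8)·(∑ᵢ |μᵢ|)², where μ₁,…,μₙ are the eigenvalues of the symmetric matrix ρ − σ (so ∑ᵢ |μᵢ| is the trace/nuclear norm of ρ − σ). -/
open Matrix

/-- The von Neumann entropy `S(M) = -∑ᵢ λᵢ log λᵢ` of a Hermitian (symmetric) real matrix,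
defined as `0` on non-Hermitian matrices. -/
noncomputable def vonNeumannEntropy {n : Type*} [Fintype n] [DecidableEq n]
    (M : Matrix n n ℝ) : ℝ :=
  if hM : M.IsHermitian then -∑ i, hM.eigenvalues i * Real.log (hM.eigenvalues i) else 0

open intervalIntegral in
lemma log_lb {t : ℝ} (ht : 1 ≤ t) : 2*(t-1)/(t+1) ≤ Real.log t := by
  have h0 : (0:ℝ) < 1 := one_pos
  have hlog : Real.log t = ∫ s in (1:ℝ)..t, s⁻¹ := by
    rw [integral_inv_of_pos h0 (lt_of_lt_of_le h0 ht)]; simp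
  have hftc : (∫ s in (1:ℝ)..t, 4*(s+1)⁻¹^2) = 2*(t-1)/(t+1) := by
    have : ∀ s ∈ Set.uIcc (1:ℝ) t, HasDerivAt (fun u : ℝ => -4*(u+1)⁻¹) (4*(s+1)⁻¹^2) s := by
      intro s hs
      rw [Set.uIcc_of_le ht] at hs
      have hs1 : s + 1 ≠ 0 := by nlinarith [hs.1]
      have := ((hasDerivAt_id s).add_const 1).inv hs1
      have := this.const_mul (-4)
      refine this.congr_deriv ?_
      simp only [id]
      field_simp
      try ring
    rw [integral_eq_sub_of_hasDerivAt this]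
    · have ht1 : t + 1 ≠ 0 := by nlinarith
      field_simp
      try ring
    · apply ContinuousOn.intervalIntegrable
      intro s hs
      rw [Set.uIcc_of_le ht] at hs
      have hs1 : s + 1 ≠ 0 := by nlinarith [hs.1]
      exact (ContinuousAt.continuousWithinAt (by fun_prop (disch := assumption)))
  rw [hlog, ← hftc]
  apply integral_mono_on ht
  · apply ContinuousOn.intervalIntegrable
    intro s hs
    rw [Set.uIcc_of_le ht] at hs
    have hs1 : s + 1 ≠ 0 := by nlinarith [hs.1]
    exact (ContinuousAt.continuousWithinAt (by fun_prop (disch := assumption)))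
  · apply ContinuousOn.intervalIntegrable
    intro s hs
    rw [Set.uIcc_of_le ht] at hs
    have hs1 : s ≠ 0 := by nlinarith [hs.1]
    exact (ContinuousAt.continuousWithinAt (by fun_prop (disch := assumption)))
  · intro s hs
    have hs0 : (0:ℝ) < s := lt_of_lt_of_le one_pos hs.1
    rw [inv_eq_one_div, inv_eq_one_div, div_pow, one_pow, mul_one_div,
      div_le_div_iff₀ (by positivity) hs0]
    nlinarith [sq_nonneg (s-1)]

lemma log_ub {t : ℝ} (h0 : 0 < t) (ht : t ≤ 1) : Real.log t ≤ 2*(t-1)/(t+1) := by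
  have hinv : (1:ℝ) ≤ t⁻¹ := by
    have h1 := mul_inv_cancel₀ h0.ne'
    have h2 : 0 < t⁻¹ := inv_pos.mpr h0
    nlinarith
  have := log_lb hinv
  rw [Real.log_inv] at this
  have ht1 : t + 1 ≠ 0 := by positivity
  have h2 : 2*(t⁻¹-1)/(t⁻¹+1) = -(2*(t-1)/(t+1)) := by
    field_simp
    ring
  rw [h2] at this
  linarith

/-- Csiszár-type function nonnegativity. -/
lemma G_nonneg {t : ℝ} (h0 : 0 < t) :
    0 ≤ (2*t+4)*(t*Real.log t - t + 1) - 3*(t-1)^2 := by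
  set G : ℝ → ℝ := fun u => (2*u+4)*(u*Real.log u - u + 1) - 3*(u-1)^2 with hG
  have hderiv : ∀ s : ℝ, 0 < s → HasDerivAt G (4*((s+1)*Real.log s - 2*(s-1))) s := by
    intro s hs
    have h1 : HasDerivAt (fun u : ℝ => u * Real.log u) (Real.log s + 1) s :=
      Real.hasDerivAt_mul_log hs.ne'
    have h2 : HasDerivAt (fun u : ℝ => u*Real.log u - u + 1) (Real.log s + 1 - 1) s :=
      (h1.sub (hasDerivAt_id s)).add_const 1
    have h3 : HasDerivAt (fun u : ℝ => 2*u+4) 2 s := by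
      simpa using ((hasDerivAt_id s).const_mul 2).add_const 4
    have h4 := h3.mul h2
    have h5 : HasDerivAt (fun u : ℝ => 3*(u-1)^2) (3*(2*(s-1))) s := by
      have := (((hasDerivAt_id s).sub_const 1).pow 2).const_mul 3
      simpa using this
    have h6 := h4.sub h5
    refine h6.congr_deriv ?_
    ring
  have hG1 : G 1 = 0 := by simp [hG]
  rcases le_total 1 t with h | h
  · have key : G t - G 1 = ∫ s in (1:ℝ)..t, 4*((s+1)*Real.log s - 2*(s-1)) := by
      rw [intervalIntegral.integral_eq_sub_of_hasDerivAt]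
      · intro s hs
        rw [Set.uIcc_of_le h] at hs
        exact hderiv s (lt_of_lt_of_le one_pos hs.1)
      · apply ContinuousOn.intervalIntegrable
        intro s hs
        rw [Set.uIcc_of_le h] at hs
        have hs0 : s ≠ 0 := by nlinarith [hs.1]
        exact (ContinuousAt.continuousWithinAt (by fun_prop (disch := assumption)))
    have hpos : 0 ≤ ∫ s in (1:ℝ)..t, 4*((s+1)*Real.log s - 2*(s-1)) := by
      apply intervalIntegral.integral_nonneg h
      intro s hs
      have hs1 : (1:ℝ) ≤ s := hs.1
      have := log_lb hs1
      have hsp : (0:ℝ) < s + 1 := by linarith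
      have : 2*(s-1) ≤ (s+1) * Real.log s := by
        rw [div_le_iff₀ hsp] at this
        linarith [this]
      linarith
    have h7 := key ▸ hpos
    rw [hG1] at h7
    have h8 : 0 ≤ G t := by linarith
    simpa [hG] using h8
  · have key : G 1 - G t = ∫ s in t..(1:ℝ), 4*((s+1)*Real.log s - 2*(s-1)) := by
      rw [intervalIntegral.integral_eq_sub_of_hasDerivAt]
      · intro s hs
        rw [Set.uIcc_of_le h] at hs
        exact hderiv s (lt_of_lt_of_le h0 hs.1)
      · apply ContinuousOn.intervalIntegrable
        intro s hs
        rw [Set.uIcc_of_le h] at hs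
        have hs0 : s ≠ 0 := by nlinarith [hs.1, h0]
        exact (ContinuousAt.continuousWithinAt (by fun_prop (disch := assumption)))
    have hneg : (∫ s in t..(1:ℝ), 4*((s+1)*Real.log s - 2*(s-1))) ≤ 0 := by
      have h2 : 0 ≤ ∫ s in t..(1:ℝ), -(4*((s+1)*Real.log s - 2*(s-1))) := by
        apply intervalIntegral.integral_nonneg h
        intro s hs
        have hs0 : 0 < s := lt_of_lt_of_le h0 hs.1
        have := log_ub hs0 hs.2
        have hsp : (0:ℝ) < s + 1 := by linarith
        have : (s+1) * Real.log s ≤ 2*(s-1) := by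
          rw [le_div_iff₀ hsp] at this
          linarith [this]
        linarith
      rw [intervalIntegral.integral_neg] at h2
      linarith
    have h7 := key ▸ hneg
    rw [hG1] at h7
    have h8 : 0 ≤ G t := by linarith
    simpa [hG] using h8

lemma key_scalar {x y : ℝ} (hx : 0 < x) (hy : 0 < y) :
    3*(x-y)^2/(2*x+4*y) ≤ x*Real.log x - x*Real.log y - x + y := by
  have h := G_nonneg (t := x/y) (by positivity)
  rw [Real.log_div hx.ne' hy.ne'] at h
  have h2 : 0 ≤ ((2*(x/y)+4)*((x/y)*(Real.log x - Real.log y) - x/y + 1) - 3*(x/y-1)^2) * y^2 :=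
    mul_nonneg h (sq_nonneg y)
  have hyne : y ≠ 0 := hy.ne'
  have h3 : 0 ≤ (2*x+4*y)*(x*(Real.log x - Real.log y) - x + y) - 3*(x-y)^2 := by
    have e : ((2*(x/y)+4)*((x/y)*(Real.log x - Real.log y) - x/y + 1) - 3*(x/y-1)^2) * y^2
        = (2*x+4*y)*(x*(Real.log x - Real.log y) - x + y) - 3*(x-y)^2 := by
      field_simp
    linarith [e ▸ h2]
  rw [div_le_iff₀ (by positivity)]
  nlinarith [h3]

lemma per_term {b lam c : ℝ} (hb : 0 ≤ b) (hl : 0 ≤ lam) (hc : 0 ≤ c)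
    (hsupp : lam = 0 → b * c = 0) :
    (b - lam)^2 * c / ((2*b + 4*lam)/3) ≤ c * (b * Real.log b - b * Real.log lam - b + lam) := by
  rcases hl.eq_or_lt with h0 | hl'
  · rcases mul_eq_zero.mp (hsupp h0.symm) with hb0 | hc0
    · subst hb0; rw [← h0]; simp
    · subst hc0; simp
  · rcases hb.eq_or_lt with hb0 | hb'
    · rw [← hb0]
      rw [div_le_iff₀ (by positivity)]
      simp only [Real.log_zero, zero_sub, zero_mul, mul_zero, neg_zero, zero_add, zero_pow,
        sub_zero, zero_div]
      ring_nf
      nlinarith [mul_nonneg hc hl'.le, mul_nonneg hc (mul_nonneg hl'.le hl'.le)]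
    · have hks := key_scalar hb' hl'
      have hne : (2*b + 4*lam) ≠ 0 := by positivity
      have heq : (b - lam)^2 * c / ((2*b + 4*lam)/3) = c * (3*(b-lam)^2/(2*b+4*lam)) := by
        field_simp
      rw [heq]
      exact mul_le_mul_of_nonneg_left hks hc

variable {n : ℕ}

lemma psd_diag_nonneg {S : Matrix (Fin n) (Fin n) ℝ} (hS : S.PosSemidef) (k : Fin n) :
    0 ≤ S k k := by
  exact hS.diag_nonneg

lemma row_sq_sum {M : Matrix (Fin n) (Fin n) ℝ} (h : M * star M = 1) (i : Fin n) :
    ∑ k, (M i k)^2 = 1 := by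
  have := congrFun (congrFun h i) i
  simpa [Matrix.mul_apply, Matrix.star_apply, Matrix.one_apply, pow_two] using this

lemma col_sq_sum {M : Matrix (Fin n) (Fin n) ℝ} (h : star M * M = 1) (k : Fin n) :
    ∑ i, (M i k)^2 = 1 := by
  have := congrFun (congrFun h k) k
  simpa [Matrix.mul_apply, Matrix.star_apply, Matrix.one_apply, pow_two] using this

lemma trace_diag_mul (b : Fin n → ℝ) (X : Matrix (Fin n) (Fin n) ℝ) :
    (Matrix.diagonal b * X).trace = ∑ i, b i * X i i := by
  simp [Matrix.trace, Matrix.diag, Matrix.diagonal_mul]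

lemma real_spectral {A : Matrix (Fin n) (Fin n) ℝ} (hA : A.IsHermitian) :
    A = (hA.eigenvectorUnitary : Matrix (Fin n) (Fin n) ℝ) * Matrix.diagonal hA.eigenvalues *
      star (hA.eigenvectorUnitary : Matrix (Fin n) (Fin n) ℝ) := by
  have := hA.spectral_theorem
  rwa [RCLike.ofReal_real_eq_id, Function.id_comp] at this

lemma real_diag {A : Matrix (Fin n) (Fin n) ℝ} (hA : A.IsHermitian) :
    star (hA.eigenvectorUnitary : Matrix (Fin n) (Fin n) ℝ) * A *
      (hA.eigenvectorUnitary : Matrix (Fin n) (Fin n) ℝ) = Matrix.diagonal hA.eigenvalues := by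
  have h1 := Matrix.UnitaryGroup.star_mul_self hA.eigenvectorUnitary
  have h3 := congrArg (fun X => star (hA.eigenvectorUnitary : Matrix (Fin n) (Fin n) ℝ) * X *
    (hA.eigenvectorUnitary : Matrix (Fin n) (Fin n) ℝ)) (real_spectral hA)
  rw [h3]
  simp only [Matrix.mul_assoc]
  rw [h1, Matrix.mul_one, ← Matrix.mul_assoc, h1, Matrix.one_mul]

lemma trace_conj_diag {Z : Matrix (Fin n) (Fin n) ℝ} (hZ : star Z * Z = 1) (d : Fin n → ℝ) :
    (Z * Matrix.diagonal d * star Z).trace = ∑ l, d l := by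
  rw [Matrix.trace_mul_cycle, hZ, Matrix.one_mul, Matrix.trace_diagonal]

lemma sum_eigs {A : Matrix (Fin n) (Fin n) ℝ} (hA : A.IsHermitian) :
    ∑ i, hA.eigenvalues i = A.trace := by
  conv_rhs => rw [real_spectral hA]
  rw [trace_conj_diag (Matrix.UnitaryGroup.star_mul_self _)]

lemma pinsker_aux {n : ℕ} (B C G P W : Matrix (Fin n) (Fin n) ℝ) (b lam : Fin n → ℝ)
    (hP1 : star P * P = 1) (hP2 : P * star P = 1)
    (hW1 : star W * W = 1) (hW2 : W * star W = 1)
    (hG1 : G * star G = 1) (hG2 : star G * G = 1)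
    (hBspec : B = P * Matrix.diagonal b * star P)
    (hCspec : C = W * Matrix.diagonal lam * star W)
    (hbnn : ∀ i, 0 ≤ b i) (hlnn : ∀ k, 0 ≤ lam k)
    (hbone : ∑ i, b i = 1) (hlone : ∑ k, lam k = 1)
    (hdom : (C + C - B).PosSemidef) :
    ((B - C) * G).trace ^ 2 / 2 ≤
      (∑ i, b i * Real.log (b i)) -
      ∑ k, (star W * (B * W)) k k * Real.log (lam k) := by
  set M : Matrix (Fin n) (Fin n) ℝ := star P * W with hMdef
  set N : Matrix (Fin n) (Fin n) ℝ := star W * G * P with hNdef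
  have hMs : star M = star W * P := by
    rw [hMdef, StarMul.star_mul, star_star]
  have hNs : star N = star P * (star G * W) := by
    rw [hNdef, StarMul.star_mul, StarMul.star_mul, star_star]
  have hM2 : M * star M = 1 := by
    rw [hMdef, hMs]
    calc star P * W * (star W * P) = star P * (W * star W) * P := by simp only [Matrix.mul_assoc]
      _ = 1 := by rw [hW2, Matrix.mul_one, hP1]
  have hM1 : star M * M = 1 := by
    rw [hMdef, hMs]
    calc star W * P * (star P * W) = star W * (P * star P) * W := by simp only [Matrix.mul_assoc]
      _ = 1 := by rw [hP2, Matrix.mul_one, hW1]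
  have hN2 : N * star N = 1 := by
    rw [hNdef, hNs]
    calc star W * G * P * (star P * (star G * W))
        = star W * (G * ((P * star P) * (star G * W))) := by simp only [Matrix.mul_assoc]
      _ = star W * (G * star G) * W := by rw [hP2, Matrix.one_mul]; simp only [Matrix.mul_assoc]
      _ = 1 := by rw [hG1, Matrix.mul_one, hW1]
  have hN1 : star N * N = 1 := by
    rw [hNdef, hNs]
    calc star P * (star G * W) * (star W * G * P)
        = star P * (star G * ((W * star W) * (G * P))) := by simp only [Matrix.mul_assoc]
      _ = star P * (star G * G) * P := by rw [hW2, Matrix.one_mul]; simp only [Matrix.mul_assoc]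
      _ = 1 := by rw [hG2, Matrix.mul_one, hP1]
  have hBWmat : star W * (B * W) = star M * (Matrix.diagonal b * M) := by
    rw [hBspec, hMs, hMdef]
    simp only [Matrix.mul_assoc]
  have hBW : ∀ k, (star W * (B * W)) k k = ∑ i, b i * (M i k)^2 := by
    intro k
    rw [hBWmat]
    rw [Matrix.mul_apply]
    apply Finset.sum_congr rfl
    intro i _
    rw [Matrix.diagonal_mul, Matrix.star_apply, star_trivial, pow_two]
    ring
  have hCW : star W * (C * W) = Matrix.diagonal lam := by
    rw [hCspec]
    calc star W * (W * Matrix.diagonal lam * star W * W)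
        = (star W * W) * Matrix.diagonal lam * (star W * W) := by simp only [Matrix.mul_assoc]
      _ = Matrix.diagonal lam := by rw [hW1, Matrix.one_mul, Matrix.mul_one]
  have hsupp : ∀ k, lam k = 0 → ∀ i, b i * (M i k)^2 = 0 := by
    intro k hk
    have hpsd := hdom.conjTranspose_mul_mul_same W
    have hcast : star W * ((C + C - B) * W) = Wᴴ * (C + C - B) * W := by
      rw [Matrix.star_eq_conjTranspose, Matrix.mul_assoc]
    have h1 : 0 ≤ (star W * ((C + C - B) * W)) k k := by
      rw [hcast]; exact psd_diag_nonneg hpsd k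
    have hexp : star W * ((C + C - B) * W)
        = star W * (C * W) + star W * (C * W) - star W * (B * W) := by
      rw [Matrix.sub_mul, Matrix.add_mul, Matrix.mul_sub, Matrix.mul_add]
    rw [hexp] at h1
    simp only [Matrix.sub_apply, Matrix.add_apply, hCW, Matrix.diagonal_apply_eq] at h1
    rw [hBW k, hk] at h1
    have hnn : ∀ i ∈ Finset.univ, 0 ≤ b i * (M i k)^2 :=
      fun i _ => mul_nonneg (hbnn i) (sq_nonneg _)
    have hsum : ∑ i, b i * (M i k)^2 = 0 :=
      le_antisymm (by linarith) (Finset.sum_nonneg hnn)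
    exact fun i => (Finset.sum_eq_zero_iff_of_nonneg hnn).mp hsum i (Finset.mem_univ i)
  -- trace identities
  have hMN : star P * (G * P) = M * N := by
    rw [hMdef, hNdef]
    calc star P * (G * P) = star P * ((W * star W) * (G * P)) := by rw [hW2, Matrix.one_mul]
      _ = star P * W * (star W * G * P) := by simp only [Matrix.mul_assoc]
  have hNM : star W * (G * W) = N * M := by
    rw [hMdef, hNdef]
    calc star W * (G * W) = star W * (G * ((P * star P) * W)) := by rw [hP2, Matrix.one_mul]
      _ = star W * G * P * (star P * W) := by simp only [Matrix.mul_assoc]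
  have htrB : (B * G).trace = ∑ i, ∑ k, b i * (M i k * N k i) := by
    rw [hBspec]
    rw [show P * Matrix.diagonal b * star P * G = P * (Matrix.diagonal b * (star P * G)) from by
      simp only [Matrix.mul_assoc]]
    rw [Matrix.trace_mul_comm]
    rw [show Matrix.diagonal b * (star P * G) * P = Matrix.diagonal b * (star P * (G * P)) from by
      simp only [Matrix.mul_assoc]]
    rw [hMN, trace_diag_mul]
    simp only [Matrix.mul_apply, Finset.mul_sum]
  have htrC : (C * G).trace = ∑ k, ∑ i, lam k * (N k i * M i k) := by
    rw [hCspec]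
    rw [show W * Matrix.diagonal lam * star W * G = W * (Matrix.diagonal lam * (star W * G)) from by
      simp only [Matrix.mul_assoc]]
    rw [Matrix.trace_mul_comm]
    rw [show Matrix.diagonal lam * (star W * G) * W = Matrix.diagonal lam * (star W * (G * W)) from by
      simp only [Matrix.mul_assoc]]
    rw [hNM, trace_diag_mul]
    simp only [Matrix.mul_apply, Finset.mul_sum]
  have htrC' : (C * G).trace = ∑ i, ∑ k, lam k * (M i k * N k i) := by
    rw [htrC, Finset.sum_comm]
    exact Finset.sum_congr rfl fun i _ => Finset.sum_congr rfl fun k _ => by ring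
  have htr : ((B - C) * G).trace = ∑ i, ∑ k, (b i - lam k) * (M i k * N k i) := by
    rw [Matrix.sub_mul, Matrix.trace_sub, htrB, htrC', ← Finset.sum_sub_distrib]
    apply Finset.sum_congr rfl
    intro i _
    rw [← Finset.sum_sub_distrib]
    exact Finset.sum_congr rfl fun k _ => by ring
  -- Cauchy–Schwarz setup
  have hw3 : ∀ i k : Fin n, (0:ℝ) ≤ (2 * b i + 4 * lam k)/3 := fun i k =>
    div_nonneg (by linarith [hbnn i, hlnn k]) (by norm_num)
  set w : Fin n → Fin n → ℝ := fun i k => (2 * b i + 4 * lam k)/3 with hwdef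
  have hwnn : ∀ i k, 0 ≤ w i k := fun i k => hw3 i k
  set p : Fin n → Fin n → ℝ := fun i k => ((b i - lam k) * M i k) / Real.sqrt (w i k) with hpdef
  set q : Fin n → Fin n → ℝ := fun i k => N k i * Real.sqrt (w i k) with hqdef
  have hpq : ∀ i k, (b i - lam k) * (M i k * N k i) = p i k * q i k := by
    intro i k
    rcases eq_or_ne (w i k) 0 with hw | hw
    · have hw' : (2 * b i + 4 * lam k)/3 = 0 := by simpa only [hwdef] using hw
      have hb0 : b i = 0 := by nlinarith [hbnn i, hlnn k]
      have hl0 : lam k = 0 := by nlinarith [hbnn i, hlnn k]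
      simp [hpdef, hqdef, hw, hb0, hl0]
    · have hwpos : 0 < w i k := lt_of_le_of_ne (hwnn i k) (Ne.symm hw)
      have hsq : Real.sqrt (w i k) ≠ 0 := by positivity
      have he : p i k * q i k
          = (b i - lam k) * M i k * N k i * (Real.sqrt (w i k) / Real.sqrt (w i k)) := by
        simp only [hpdef, hqdef]; ring
      rw [he, div_self hsq, mul_one]; ring
  have hq2 : ∑ i, ∑ k, q i k ^ 2 = 2 := by
    have hrowN : ∀ k, ∑ i, N k i ^2 = 1 := row_sq_sum hN2
    have hcolN : ∀ i, ∑ k, N k i ^2 = 1 := col_sq_sum hN1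
    have hqv : ∀ i k, q i k ^2 = (2/3) * (N k i ^2 * b i) + (4/3) * (N k i ^2 * lam k) := by
      intro i k
      simp only [hqdef, hwdef]
      rw [mul_pow, Real.sq_sqrt (hw3 i k)]
      ring
    have h1 : ∑ i, ∑ k, N k i ^2 * b i = 1 := by
      rw [← hbone]
      apply Finset.sum_congr rfl; intro i _
      rw [← Finset.sum_mul, hcolN i, one_mul]
    have h2 : ∑ i, ∑ k, N k i ^2 * lam k = 1 := by
      rw [Finset.sum_comm, ← hlone]
      apply Finset.sum_congr rfl; intro k _
      rw [← Finset.sum_mul, hrowN k, one_mul]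
    calc ∑ i, ∑ k, q i k ^2
        = ∑ i, ∑ k, ((2/3) * (N k i ^2 * b i) + (4/3) * (N k i ^2 * lam k)) :=
          Finset.sum_congr rfl fun i _ => Finset.sum_congr rfl fun k _ => hqv i k
      _ = (2/3) * (∑ i, ∑ k, N k i ^2 * b i) + (4/3) * (∑ i, ∑ k, N k i ^2 * lam k) := by
          simp only [Finset.sum_add_distrib, Finset.mul_sum]
      _ = 2 := by rw [h1, h2]; norm_num
  have hp2 : ∀ i k, p i k ^2
      ≤ M i k ^2 * (b i * Real.log (b i) - b i * Real.log (lam k) - b i + lam k) := by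
    intro i k
    have he : p i k ^2 = (b i - lam k)^2 * M i k ^2 / ((2 * b i + 4 * lam k)/3) := by
      simp only [hpdef, hwdef]
      rw [div_pow, Real.sq_sqrt (hw3 i k), mul_pow]
    rw [he]
    exact per_term (hbnn i) (hlnn k) (sq_nonneg (M i k)) (fun hk => hsupp k hk i)
  have hrowM : ∀ i, ∑ k, M i k ^2 = 1 := row_sq_sum hM2
  have hcolM : ∀ k, ∑ i, M i k ^2 = 1 := col_sq_sum hM1
  have hS1 : ∑ i, ∑ k, M i k ^2 * (b i * Real.log (b i)) = ∑ i, b i * Real.log (b i) := by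
    apply Finset.sum_congr rfl; intro i _
    rw [← Finset.sum_mul, hrowM i, one_mul]
  have hS2 : ∑ i, ∑ k, M i k ^2 * (b i * Real.log (lam k))
      = ∑ k, (star W * (B * W)) k k * Real.log (lam k) := by
    rw [Finset.sum_comm]
    apply Finset.sum_congr rfl; intro k _
    rw [hBW k, Finset.sum_mul]
    apply Finset.sum_congr rfl; intro i _
    ring
  have hS3 : ∑ i, ∑ k, M i k ^2 * b i = 1 := by
    rw [← hbone]; apply Finset.sum_congr rfl; intro i _
    rw [← Finset.sum_mul, hrowM i, one_mul]
  have hS4 : ∑ i, ∑ k, M i k ^2 * lam k = 1 := by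
    rw [Finset.sum_comm, ← hlone]; apply Finset.sum_congr rfl; intro k _
    rw [← Finset.sum_mul, hcolM k, one_mul]
  have hsum_p2 : ∑ i, ∑ k, p i k ^2 ≤
      (∑ i, b i * Real.log (b i)) - ∑ k, (star W * (B * W)) k k * Real.log (lam k) := by
    have step1 : ∑ i, ∑ k, p i k ^2
        ≤ ∑ i, ∑ k, M i k ^2 * (b i * Real.log (b i) - b i * Real.log (lam k) - b i + lam k) :=
      Finset.sum_le_sum fun i _ => Finset.sum_le_sum fun k _ => hp2 i k
    have step2 : ∑ i, ∑ k, M i k ^2 * (b i * Real.log (b i) - b i * Real.log (lam k) - b i + lam k)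
        = (∑ i, ∑ k, M i k ^2 * (b i * Real.log (b i)))
          - (∑ i, ∑ k, M i k ^2 * (b i * Real.log (lam k)))
          - (∑ i, ∑ k, M i k ^2 * b i) + (∑ i, ∑ k, M i k ^2 * lam k) := by
      simp only [← Finset.sum_add_distrib, ← Finset.sum_sub_distrib]
      exact Finset.sum_congr rfl fun i _ => Finset.sum_congr rfl fun k _ => by ring
    rw [step2, hS1, hS2, hS3, hS4] at step1
    linarith
  have hCS := Finset.sum_mul_sq_le_sq_mul_sq Finset.univ
      (fun ik : Fin n × Fin n => p ik.1 ik.2) (fun ik : Fin n × Fin n => q ik.1 ik.2)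
  have e1 : (∑ i, ∑ k, p i k * q i k) = ∑ ik : Fin n × Fin n, p ik.1 ik.2 * q ik.1 ik.2 :=
    (Fintype.sum_prod_type (f := fun ik : Fin n × Fin n => p ik.1 ik.2 * q ik.1 ik.2)).symm
  have e2 : (∑ i, ∑ k, p i k ^2) = ∑ ik : Fin n × Fin n, p ik.1 ik.2 ^2 :=
    (Fintype.sum_prod_type (f := fun ik : Fin n × Fin n => p ik.1 ik.2 ^2)).symm
  have e3 : (∑ i, ∑ k, q i k ^2) = ∑ ik : Fin n × Fin n, q ik.1 ik.2 ^2 :=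
    (Fintype.sum_prod_type (f := fun ik : Fin n × Fin n => q ik.1 ik.2 ^2)).symm
  have htr2 : ((B - C) * G).trace = ∑ i, ∑ k, p i k * q i k := by
    rw [htr]; exact Finset.sum_congr rfl fun i _ => Finset.sum_congr rfl fun k _ => hpq i k
  have hkey : ((B - C) * G).trace ^2 ≤ (∑ i, ∑ k, p i k ^2) * 2 := by
    rw [htr2, e1]
    calc (∑ ik : Fin n × Fin n, p ik.1 ik.2 * q ik.1 ik.2)^2
        ≤ (∑ ik : Fin n × Fin n, p ik.1 ik.2 ^2) * (∑ ik : Fin n × Fin n, q ik.1 ik.2 ^2) := hCS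
      _ = (∑ i, ∑ k, p i k ^2) * 2 := by rw [← e2, ← e3, hq2]
  rw [div_le_iff₀ (by norm_num : (0:ℝ) < 2)]
  calc ((B - C) * G).trace ^2 ≤ (∑ i, ∑ k, p i k ^2) * 2 := hkey
    _ ≤ ((∑ i, b i * Real.log (b i))
          - ∑ k, (star W * (B * W)) k k * Real.log (lam k)) * 2 := by linarith [hsum_p2]

/-- The quantum Jensen-Shannon divergence is bounded below by one eighth of the squared
trace (nuclear) norm of the difference of the density matrices. -/
theorem qjsd_ge_traceNorm_sq {n : ℕ} {ρ σ : Matrix (Fin n) (Fin n) ℝ}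
    (hρ : ρ.PosSemidef) (hσ : σ.PosSemidef) (hρ1 : ρ.trace = 1) (hσ1 : σ.trace = 1) :
    vonNeumannEntropy ((1 / 2 : ℝ) • (ρ + σ))
        - (1 / 2) * (vonNeumannEntropy ρ + vonNeumannEntropy σ) ≥
      (1 / 8) * (∑ i, |(hρ.1.sub hσ.1).eigenvalues i|) ^ 2 := by
  classical
  have hXh : (ρ - σ).IsHermitian := hρ.1.sub hσ.1
  set m : Matrix (Fin n) (Fin n) ℝ := (1 / 2 : ℝ) • (ρ + σ) with hmdef
  have hps : (ρ + σ).IsHermitian := hρ.1.add hσ.1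
  have hmh : m.IsHermitian := by
    show mᴴ = m
    rw [hmdef, Matrix.conjTranspose_smul, star_trivial, hps]
  have hm : m.PosSemidef := by
    rw [hmdef]; exact (hρ.add hσ).smul (by norm_num)
  have hmt : m.trace = 1 := by
    rw [hmdef, Matrix.trace_smul, Matrix.trace_add, hρ1, hσ1]
    norm_num
  -- sign unitary
  set Z : Matrix (Fin n) (Fin n) ℝ := (hXh.eigenvectorUnitary : Matrix (Fin n) (Fin n) ℝ)
    with hZdef
  have hZ1 : star Z * Z = 1 := Matrix.UnitaryGroup.star_mul_self _
  have hZ2 : Z * star Z = 1 := Matrix.mem_unitaryGroup_iff.mp hXh.eigenvectorUnitary.2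
  set sg : Fin n → ℝ := fun l => if 0 ≤ hXh.eigenvalues l then 1 else -1 with hsdef
  have hss : (fun l => sg l * sg l) = fun _ => (1:ℝ) := by
    funext l
    simp only [hsdef]
    split <;> norm_num
  set G : Matrix (Fin n) (Fin n) ℝ := Z * Matrix.diagonal sg * star Z with hGdef
  have hDs : star (Matrix.diagonal sg) = Matrix.diagonal sg := by
    rw [Matrix.star_eq_conjTranspose, Matrix.diagonal_conjTranspose]
    congr
  have hGstar : star G = G := by
    rw [hGdef, StarMul.star_mul, StarMul.star_mul, star_star, hDs]
    simp only [Matrix.mul_assoc]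
  have hGG : G * G = 1 := by
    rw [hGdef]
    calc (Z * Matrix.diagonal sg * star Z) * (Z * Matrix.diagonal sg * star Z)
        = Z * (Matrix.diagonal sg * ((star Z * Z) * (Matrix.diagonal sg * star Z))) := by
          simp only [Matrix.mul_assoc]
      _ = Z * ((Matrix.diagonal sg * Matrix.diagonal sg) * star Z) := by
          rw [hZ1, Matrix.one_mul, Matrix.mul_assoc]
      _ = Z * (1 * star Z) := by rw [Matrix.diagonal_mul_diagonal, hss, Matrix.diagonal_one]
      _ = 1 := by rw [Matrix.one_mul, hZ2]
  have hG1 : G * star G = 1 := by rw [hGstar]; exact hGG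
  have hG2 : star G * G = 1 := by rw [hGstar]; exact hGG
  -- trace of (ρ-σ) * G is the trace norm
  have hXspec : ρ - σ = Z * Matrix.diagonal hXh.eigenvalues * star Z := real_spectral hXh
  have htrXG : ((ρ - σ) * G).trace = ∑ l, |hXh.eigenvalues l| := by
    have hcomb : (ρ - σ) * G
        = Z * (Matrix.diagonal hXh.eigenvalues * Matrix.diagonal sg) * star Z := by
      conv_lhs => rw [hXspec, hGdef]
      calc Z * Matrix.diagonal hXh.eigenvalues * star Z * (Z * Matrix.diagonal sg * star Z)
          = Z * (Matrix.diagonal hXh.eigenvalues * ((star Z * Z)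
              * (Matrix.diagonal sg * star Z))) := by simp only [Matrix.mul_assoc]
        _ = Z * (Matrix.diagonal hXh.eigenvalues * (Matrix.diagonal sg * star Z)) := by
            rw [hZ1, Matrix.one_mul]
        _ = Z * (Matrix.diagonal hXh.eigenvalues * Matrix.diagonal sg) * star Z := by
            simp only [Matrix.mul_assoc]
    rw [hcomb, Matrix.diagonal_mul_diagonal, trace_conj_diag hZ1]
    apply Finset.sum_congr rfl
    intro l _
    simp only [hsdef]
    split
    · rename_i h; rw [mul_one, abs_of_nonneg h]
    · rename_i h; push_neg at h; rw [abs_of_neg h]; ring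
  -- instantiate Pinsker twice
  set P : Matrix (Fin n) (Fin n) ℝ := (hρ.1.eigenvectorUnitary : Matrix (Fin n) (Fin n) ℝ)
  set Q : Matrix (Fin n) (Fin n) ℝ := (hσ.1.eigenvectorUnitary : Matrix (Fin n) (Fin n) ℝ)
  set W : Matrix (Fin n) (Fin n) ℝ := (hmh.eigenvectorUnitary : Matrix (Fin n) (Fin n) ℝ)
  have hP1 : star P * P = 1 := Matrix.UnitaryGroup.star_mul_self _
  have hP2 : P * star P = 1 := Matrix.mem_unitaryGroup_iff.mp hρ.1.eigenvectorUnitary.2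
  have hQ1 : star Q * Q = 1 := Matrix.UnitaryGroup.star_mul_self _
  have hQ2 : Q * star Q = 1 := Matrix.mem_unitaryGroup_iff.mp hσ.1.eigenvectorUnitary.2
  have hW1 : star W * W = 1 := Matrix.UnitaryGroup.star_mul_self _
  have hW2 : W * star W = 1 := Matrix.mem_unitaryGroup_iff.mp hmh.eigenvectorUnitary.2
  have hG1' : (-G) * star (-G) = 1 := by
    rw [star_neg, Matrix.neg_mul, Matrix.mul_neg, neg_neg, hG1]
  have hG2' : star (-G) * (-G) = 1 := by
    rw [star_neg, Matrix.neg_mul, Matrix.mul_neg, neg_neg, hG2]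
  have hdomρ : (m + m - ρ).PosSemidef := by
    have he : m + m - ρ = σ := by rw [hmdef]; module
    rw [he]; exact hσ
  have hdomσ : (m + m - σ).PosSemidef := by
    have he : m + m - σ = ρ := by rw [hmdef]; module
    rw [he]; exact hρ
  have hpinsρ := pinsker_aux ρ m G P W hρ.1.eigenvalues hmh.eigenvalues
    hP1 hP2 hW1 hW2 hG1 hG2 (real_spectral hρ.1) (real_spectral hmh)
    hρ.eigenvalues_nonneg hm.eigenvalues_nonneg
    ((sum_eigs hρ.1).trans hρ1) ((sum_eigs hmh).trans hmt) hdomρ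
  have hpinsσ := pinsker_aux σ m (-G) Q W hσ.1.eigenvalues hmh.eigenvalues
    hQ1 hQ2 hW1 hW2 hG1' hG2' (real_spectral hσ.1) (real_spectral hmh)
    hσ.eigenvalues_nonneg hm.eigenvalues_nonneg
    ((sum_eigs hσ.1).trans hσ1) ((sum_eigs hmh).trans hmt) hdomσ
  -- compute the two traces
  set T : ℝ := ∑ l, |hXh.eigenvalues l| with hTdef
  have htr1 : ((ρ - m) * G).trace = (1/2) * T := by
    have he : ρ - m = (1/2 : ℝ) • (ρ - σ) := by rw [hmdef]; module
    rw [he, Matrix.smul_mul, Matrix.trace_smul, htrXG, smul_eq_mul]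
  have htr2 : ((σ - m) * (-G)).trace = (1/2) * T := by
    have he : σ - m = (-(1/2) : ℝ) • (ρ - σ) := by rw [hmdef]; module
    rw [he, Matrix.smul_mul, Matrix.mul_neg, Matrix.trace_smul, Matrix.trace_neg, htrXG,
      smul_eq_mul]
    ring
  rw [htr1] at hpinsρ
  rw [htr2] at hpinsσ
  -- the cross-entropy terms sum to twice the entropy of m
  have hWm : star W * (m * W) = Matrix.diagonal hmh.eigenvalues := by
    rw [← Matrix.mul_assoc]; exact real_diag hmh
  have hsumk : ∀ k, (star W * (ρ * W)) k k + (star W * (σ * W)) k k = 2 * hmh.eigenvalues k := by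
    intro k
    have hmat : star W * (ρ * W) + star W * (σ * W)
        = Matrix.diagonal hmh.eigenvalues + Matrix.diagonal hmh.eigenvalues := by
      rw [← Matrix.mul_add, ← Matrix.add_mul]
      have h2 : ρ + σ = m + m := by rw [hmdef]; module
      rw [h2, Matrix.add_mul, Matrix.mul_add, hWm]
    have := congrFun (congrFun hmat k) k
    simpa [Matrix.add_apply, Matrix.diagonal_apply_eq, two_mul] using this
  have hcross : (∑ k, (star W * (ρ * W)) k k * Real.log (hmh.eigenvalues k))
      + (∑ k, (star W * (σ * W)) k k * Real.log (hmh.eigenvalues k))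
      = 2 * ∑ k, hmh.eigenvalues k * Real.log (hmh.eigenvalues k) := by
    rw [← Finset.sum_add_distrib, Finset.mul_sum]
    apply Finset.sum_congr rfl
    intro k _
    rw [← add_mul, hsumk k, mul_assoc]
  -- unfold entropies and conclude
  rw [ge_iff_le, vonNeumannEntropy, vonNeumannEntropy, vonNeumannEntropy,
    dif_pos hmh, dif_pos hρ.1, dif_pos hσ.1]

  have harith : ((1/2) * T)^2 / 2 = (1/8) * T^2 := by ring
  rw [harith] at hpinsρ hpinsσ
  linarith [hpinsρ, hpinsσ, hcross]
end

section
/- Let ρ and σ be n×n real symmetric positive semidefinite matrices with trace 1. Then the quantum Jensen–Shannon divergence is bounded below by one eighth of the squared Frobenius (Hilbert–Schmidt) norm of their difference: S((ρ+σ)/2) − (1/2)(S(ρ) + S(σ)) ≥ (1/8)·∑_{i,j} (ρᵢⱼ − σᵢⱼ)². -/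
open Matrix


lemma aux_deriv1 {t : ℝ} (ht' : (0:ℝ) < t) :
    HasDerivAt (fun x : ℝ => x - 1 - (x - 1)^2 / 2 - Real.log x) (1 - (t - 1) - t⁻¹) t := by
  have h3 := (((hasDerivAt_id t).sub_const 1).sub
      ((((hasDerivAt_id t).sub_const 1).pow 2).div_const 2)).sub (Real.hasDerivAt_log ht'.ne')
  simp only [id_eq] at h3
  refine h3.congr_deriv ?_
  norm_num

lemma aux_deriv2 {s : ℝ} (hs' : (0:ℝ) < s) :
    HasDerivAt (fun x : ℝ => x - 1 - (x - 1)^2 / (2 * x) - Real.log x)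
      ((s - 1)^2 / (2 * s^2)) s := by
  have h2 : HasDerivAt (fun x : ℝ => (x - 1)^2 / (2 * x))
      ((2 * (s-1) * (2*s) - (s-1)^2 * 2) / (2*s)^2) s := by
    have := (((hasDerivAt_id s).sub_const 1).pow 2).div ((hasDerivAt_id s).const_mul 2)
      (by positivity)
    simp only [id_eq] at this
    refine this.congr_deriv ?_
    simp only [Pi.pow_apply]
    norm_num
  have h3 := (((hasDerivAt_id s).sub_const 1).sub h2).sub (Real.hasDerivAt_log hs'.ne')
  simp only [id_eq] at h3
  refine h3.congr_deriv ?_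
  have := hs'.ne'
  field_simp
  ring

lemma log_ineq1 {x : ℝ} (hx : 0 < x) (hx1 : x ≤ 1) :
    Real.log x ≤ (x - 1) - (x - 1)^2 / 2 := by
  have hanti : AntitoneOn (fun x : ℝ => x - 1 - (x - 1)^2 / 2 - Real.log x) (Set.Ioi 0) := by
    apply antitoneOn_of_deriv_nonpos (convex_Ioi 0)
    · fun_prop (disch := intro x hx; simp at hx; positivity)
    · intro t ht
      rw [interior_Ioi] at ht
      exact (aux_deriv1 ht).differentiableAt.differentiableWithinAt
    · intro t ht
      rw [interior_Ioi] at ht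
      have ht' : (0:ℝ) < t := ht
      rw [(aux_deriv1 ht').deriv]
      have h4 : t⁻¹ = 1 / t := inv_eq_one_div t
      rw [h4, sub_nonpos, le_div_iff₀ ht']
      nlinarith [sq_nonneg (t-1)]
  have := hanti (Set.mem_Ioi.mpr hx) (Set.mem_Ioi.mpr one_pos) hx1
  simp only [Real.log_one] at this
  linarith

lemma log_ineq2 {t : ℝ} (ht : 1 ≤ t) :
    Real.log t ≤ (t - 1) - (t - 1)^2 / (2 * t) := by
  have hmono : MonotoneOn (fun x : ℝ => x - 1 - (x - 1)^2 / (2 * x) - Real.log x) (Set.Ioi 0) := by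
    apply monotoneOn_of_deriv_nonneg (convex_Ioi 0)
    · fun_prop (disch := intro x hx; simp at hx; positivity)
    · intro s hs
      rw [interior_Ioi] at hs
      exact (aux_deriv2 hs).differentiableAt.differentiableWithinAt
    · intro s hs
      rw [interior_Ioi] at hs
      have hs' : (0:ℝ) < s := hs
      rw [(aux_deriv2 hs').deriv]
      positivity
  have := hmono (Set.mem_Ioi.mpr one_pos) (Set.mem_Ioi.mpr (lt_of_lt_of_le one_pos ht)) ht
  simp only [Real.log_one] at this
  linarith


lemma scalar_klein {a b : ℝ} (ha : 0 ≤ a) (ha1 : a ≤ 1) (hb : 0 ≤ b) (hb1 : b ≤ 1)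
    (hz : b = 0 → a = 0) :
    0 ≤ a * Real.log a - a * Real.log b - a + b - (a - b)^2 / 2 := by
  rcases eq_or_lt_of_le hb with hb0 | hb'
  · have ha0 : a = 0 := hz hb0.symm
    simp [ha0, ← hb0]
  rcases eq_or_lt_of_le ha with ha0 | ha'
  · rw [← ha0]
    simp only [zero_mul, Real.log_zero, mul_zero, sub_zero, zero_sub, neg_zero, zero_add]
    nlinarith
  have hlogdiv : Real.log (b / a) = Real.log b - Real.log a := Real.log_div hb'.ne' ha'.ne'
  rcases le_or_gt b a with hba | hab
  · have H := log_ineq1 (x := b / a) (by positivity) ((div_le_one ha').mpr hba)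
    rw [hlogdiv] at H
    have H2 : a^2 * (Real.log b - Real.log a) ≤ a*(b-a) - (b-a)^2/2 := by
      calc a^2 * (Real.log b - Real.log a) ≤ a^2 * ((b/a - 1) - (b/a - 1)^2/2) := by
            apply mul_le_mul_of_nonneg_left H (by positivity)
        _ = a*(b-a) - (b-a)^2/2 := by field_simp
    nlinarith [mul_nonneg (sub_nonneg.mpr ha1) (sq_nonneg (a-b)), ha', H2]
  · have H := log_ineq2 (t := b / a) ((one_le_div ha').mpr hab.le)
    rw [hlogdiv] at H
    have H2 : a*b*(Real.log b - Real.log a) ≤ b*(b-a) - (b-a)^2/2 := by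
      calc a*b*(Real.log b - Real.log a) ≤ a*b*((b/a - 1) - (b/a - 1)^2/(2*(b/a))) := by
            apply mul_le_mul_of_nonneg_left H (by positivity)
        _ = b*(b-a) - (b-a)^2/2 := by field_simp
    nlinarith [mul_nonneg (sub_nonneg.mpr hb1) (sq_nonneg (b-a)), hb', H2]

lemma trace_helper {n : ℕ} (U V : Matrix (Fin n) (Fin n) ℝ) (a b : Fin n → ℝ) :
    ((U * diagonal a * star U) * (V * diagonal b * star V)).trace
      = ∑ i, ∑ j, a i * b j * ((star U * V) i j)^2 := by
  have h1 : (U * diagonal a * star U) * (V * diagonal b * star V)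
      = U * (diagonal a * ((star U * V) * (diagonal b * star V))) := by
    simp only [Matrix.mul_assoc]
  rw [h1, Matrix.trace_mul_comm]
  have h2 : diagonal a * (star U * V * (diagonal b * star V)) * U
      = diagonal a * ((star U * V) * (diagonal b * (star V * U))) := by
    simp only [Matrix.mul_assoc]
  rw [h2, Matrix.trace]
  simp only [Matrix.diag]
  apply Finset.sum_congr rfl
  intro i _
  rw [Matrix.diagonal_mul, Matrix.mul_apply, Finset.mul_sum]
  apply Finset.sum_congr rfl
  intro j _
  rw [Matrix.diagonal_mul]
  have hVU : (star V * U) j i = (star U * V) i j := by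
    simp only [Matrix.mul_apply, Matrix.star_apply, star_trivial]
    exact Finset.sum_congr rfl fun k _ => by ring
  rw [hVU]; ring

lemma klein {n : ℕ} {A B : Matrix (Fin n) (Fin n) ℝ}
    (hA : A.PosSemidef) (hB : B.PosSemidef) (hAt : A.trace = 1) (hBt : B.trace = 1)
    (hAB : (B + B - A).PosSemidef) :
    (1/2) * ((A - B) * (A - B)).trace ≤
      ∑ i, hA.1.eigenvalues i * Real.log (hA.1.eigenvalues i)
      - ∑ j, ((star (hB.1.eigenvectorUnitary : Matrix (Fin n) (Fin n) ℝ) * A *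
          (hB.1.eigenvectorUnitary : Matrix (Fin n) (Fin n) ℝ)) j j)
            * Real.log (hB.1.eigenvalues j) := by
  set α := hA.1.eigenvalues with hα
  set β := hB.1.eigenvalues with hβ
  set U : Matrix (Fin n) (Fin n) ℝ := (hA.1.eigenvectorUnitary : Matrix (Fin n) (Fin n) ℝ) with hU
  set V : Matrix (Fin n) (Fin n) ℝ := (hB.1.eigenvectorUnitary : Matrix (Fin n) (Fin n) ℝ) with hV
  have hofreal : ∀ (f : Fin n → ℝ), (RCLike.ofReal ∘ f) = f := by
    intro f; rw [RCLike.ofReal_real_eq_id, Function.id_comp]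
  have hAspec : A = U * diagonal α * star U := by
    have := hA.1.spectral_theorem; rwa [hofreal] at this
  have hBspec : B = V * diagonal β * star V := by
    have := hB.1.spectral_theorem; rwa [hofreal] at this
  have hUU : star U * U = 1 := mem_unitaryGroup_iff'.mp hA.1.eigenvectorUnitary.2
  have hVV : star V * V = 1 := mem_unitaryGroup_iff'.mp hB.1.eigenvectorUnitary.2
  have hUU' : U * star U = 1 := mem_unitaryGroup_iff.mp hA.1.eigenvectorUnitary.2
  have hVV' : V * star V = 1 := mem_unitaryGroup_iff.mp hB.1.eigenvectorUnitary.2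
  set C : Matrix (Fin n) (Fin n) ℝ := star U * V with hC
  have hCstar : star C = star V * U := by rw [hC, Matrix.star_mul, star_star]
  -- row and column sums of C i j ^ 2
  have hrow : ∀ i, ∑ j, (C i j)^2 = 1 := by
    intro i
    have h1 : C * star C = 1 := by
      rw [hCstar, hC]
      calc star U * V * (star V * U) = star U * (V * star V * U) := by
            simp only [Matrix.mul_assoc]
        _ = 1 := by rw [hVV', Matrix.one_mul, hUU]
    have := congrFun (congrFun h1 i) i
    rw [Matrix.mul_apply] at this
    simp only [Matrix.star_apply, star_trivial, Matrix.one_apply_eq] at this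
    rw [← this]
    exact Finset.sum_congr rfl fun j _ => by ring
  have hcol : ∀ j, ∑ i, (C i j)^2 = 1 := by
    intro j
    have h1 : star C * C = 1 := by
      rw [hCstar, hC]
      calc star V * U * (star U * V) = star V * (U * star U * V) := by
            simp only [Matrix.mul_assoc]
        _ = 1 := by rw [hUU', Matrix.one_mul, hVV]
    have := congrFun (congrFun h1 j) j
    rw [Matrix.mul_apply] at this
    simp only [Matrix.star_apply, star_trivial, Matrix.one_apply_eq] at this
    rw [← this]
    exact Finset.sum_congr rfl fun i _ => by ring
  -- diagonal entries of star V * A * V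
  have hdiagA : ∀ j, (star V * A * V) j j = ∑ i, α i * (C i j)^2 := by
    intro j
    have h1 : star V * A * V = star C * (diagonal α * C) := by
      rw [hAspec, hCstar, hC]
      simp only [Matrix.mul_assoc]
    rw [h1, Matrix.mul_apply]
    apply Finset.sum_congr rfl
    intro i _
    rw [Matrix.diagonal_mul, hCstar, hC]
    have : (star V * U) j i = C i j := by
      rw [hC]
      simp only [Matrix.mul_apply, Matrix.star_apply, star_trivial]
      exact Finset.sum_congr rfl fun k _ => by ring
    rw [this]; ring
  -- traces
  have htrA : ∑ i, α i = 1 := by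
    rw [← hAt]
    conv_rhs => rw [hAspec]
    have h1 : U * diagonal α * star U = U * (diagonal α * star U) := by
      simp only [Matrix.mul_assoc]
    rw [h1, Matrix.trace_mul_comm]
    have h2 : diagonal α * star U * U = diagonal α * (star U * U) := by
      simp only [Matrix.mul_assoc]
    rw [h2, hUU, Matrix.mul_one, Matrix.trace_diagonal]
  have htrB : ∑ j, β j = 1 := by
    rw [← hBt]
    conv_rhs => rw [hBspec]
    have h1 : V * diagonal β * star V = V * (diagonal β * star V) := by
      simp only [Matrix.mul_assoc]
    rw [h1, Matrix.trace_mul_comm]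
    have h2 : diagonal β * star V * V = diagonal β * (star V * V) := by
      simp only [Matrix.mul_assoc]
    rw [h2, hVV, Matrix.mul_one, Matrix.trace_diagonal]
  have htrAB : (A * B).trace = ∑ i, ∑ j, α i * β j * (C i j)^2 := by
    rw [hAspec, hBspec, trace_helper U V α β, ← hC]
  have htrA2 : (A * A).trace = ∑ i, (α i)^2 := by
    rw [hAspec]
    rw [trace_helper U U α α]
    rw [hUU]
    apply Finset.sum_congr rfl
    intro i _
    rw [Finset.sum_eq_single i]
    · rw [Matrix.one_apply_eq]; ring
    · intro k _ hk; rw [Matrix.one_apply_ne (Ne.symm hk)]; ring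
    · intro h; exact absurd (Finset.mem_univ i) h
  have htrB2 : (B * B).trace = ∑ j, (β j)^2 := by
    rw [hBspec]
    rw [trace_helper V V β β]
    rw [hVV]
    apply Finset.sum_congr rfl
    intro i _
    rw [Finset.sum_eq_single i]
    · rw [Matrix.one_apply_eq]; ring
    · intro k _ hk; rw [Matrix.one_apply_ne (Ne.symm hk)]; ring
    · intro h; exact absurd (Finset.mem_univ i) h
  -- eigenvalue bounds
  have hα0 : ∀ i, 0 ≤ α i := fun i => hA.eigenvalues_nonneg i
  have hβ0 : ∀ j, 0 ≤ β j := fun j => hB.eigenvalues_nonneg j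
  have hα1 : ∀ i, α i ≤ 1 :=
    fun i => htrA ▸ Finset.single_le_sum (fun k _ => hα0 k) (Finset.mem_univ i)
  have hβ1 : ∀ j, β j ≤ 1 :=
    fun j => htrB ▸ Finset.single_le_sum (fun k _ => hβ0 k) (Finset.mem_univ j)
  -- kernel condition
  have hker : ∀ j, β j = 0 → ∀ i, α i * C i j = 0 := by
    intro j hj i
    set x : Fin n → ℝ := fun k => V k j with hx
    have hBV : B * V = V * diagonal β := by
      rw [hBspec]
      calc V * diagonal β * star V * V = V * diagonal β * (star V * V) := by
            simp only [Matrix.mul_assoc]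
        _ = V * diagonal β := by rw [hVV, Matrix.mul_one]
    have hBx : B *ᵥ x = 0 := by
      funext k
      have h1 : (B * V) k j = (V * diagonal β) k j := by rw [hBV]
      rw [Matrix.mul_apply, Matrix.mul_diagonal, hj, mul_zero] at h1
      simpa [Matrix.mulVec, dotProduct, hx] using h1
    have hstarx : star x = x := by funext k; simp [hx]
    have hAxx : star x ⬝ᵥ A *ᵥ x = 0 := by
      have h1 := hAB.dotProduct_mulVec_nonneg x
      rw [Matrix.sub_mulVec, Matrix.add_mulVec, hBx] at h1
      simp only [add_zero, dotProduct_sub, dotProduct_add, dotProduct_zero] at h1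
      have h2 := hA.dotProduct_mulVec_nonneg x
      linarith
    have hAx : A *ᵥ x = 0 := (hA.dotProduct_mulVec_zero_iff x).mp hAxx
    have hAV : ∀ k, (A * V) k j = 0 := by
      intro k
      have := congrFun hAx k
      simpa [Matrix.mulVec, dotProduct, Matrix.mul_apply, hx] using this
    have h2 : star U * A * V = diagonal α * C := by
      rw [hAspec, hC]
      calc star U * (U * diagonal α * star U) * V
          = (star U * U) * (diagonal α * (star U * V)) := by simp only [Matrix.mul_assoc]
        _ = diagonal α * (star U * V) := by rw [hUU, Matrix.one_mul]
    have h3 : (diagonal α * C) i j = 0 := by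
      rw [← h2, Matrix.mul_assoc, Matrix.mul_apply]
      apply Finset.sum_eq_zero
      intro k _
      rw [hAV k, mul_zero]
    rwa [Matrix.diagonal_mul] at h3
  -- per-term nonnegativity
  have key : ∀ i j, 0 ≤ (C i j)^2 *
      (α i * Real.log (α i) - α i * Real.log (β j) - α i + β j - (α i - β j)^2/2) := by
    intro i j
    by_cases hbj : β j = 0
    · rcases mul_eq_zero.mp (hker j hbj i) with hai | hcij
      · rw [hai, hbj]; simp
      · rw [hcij]; simp
    · exact mul_nonneg (sq_nonneg _)
        (scalar_klein (hα0 i) (hα1 i) (hβ0 j) (hβ1 j) (fun h => absurd h hbj))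
  have hsum : 0 ≤ ∑ i, ∑ j, (C i j)^2 *
      (α i * Real.log (α i) - α i * Real.log (β j) - α i + β j - (α i - β j)^2/2) :=
    Finset.sum_nonneg fun i _ => Finset.sum_nonneg fun j _ => key i j
  -- sum identities
  have hrowsum : ∀ (f : Fin n → ℝ), ∑ i, ∑ j, (C i j)^2 * f i = ∑ i, f i := by
    intro f
    apply Finset.sum_congr rfl
    intro i _
    rw [← Finset.sum_mul, hrow i, one_mul]
  have hcolsum : ∀ (g : Fin n → ℝ), ∑ i, ∑ j, (C i j)^2 * g j = ∑ j, g j := by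
    intro g
    rw [Finset.sum_comm]
    apply Finset.sum_congr rfl
    intro j _
    rw [← Finset.sum_mul, hcol j, one_mul]
  have e1 : ∑ i, ∑ j, (C i j)^2 * (α i * Real.log (α i)) = ∑ i, α i * Real.log (α i) :=
    hrowsum _
  have e2 : ∑ i, ∑ j, (C i j)^2 * (α i * Real.log (β j))
      = ∑ j, (star V * A * V) j j * Real.log (β j) := by
    rw [Finset.sum_comm]
    apply Finset.sum_congr rfl
    intro j _
    rw [hdiagA j, Finset.sum_mul]
    exact Finset.sum_congr rfl fun i _ => by ring
  have e3 : ∑ i, ∑ j, (C i j)^2 * α i = 1 := by rw [hrowsum]; exact htrA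
  have e4 : ∑ i, ∑ j, (C i j)^2 * β j = 1 := by rw [hcolsum]; exact htrB
  have e5 : ∑ i, ∑ j, (C i j)^2 * (α i - β j)^2 = ((A - B) * (A - B)).trace := by
    have lhs : ∑ i, ∑ j, (C i j)^2 * (α i - β j)^2
        = (∑ i, ∑ j, (C i j)^2 * (α i)^2) + (∑ i, ∑ j, (C i j)^2 * (β j)^2)
          - 2 * (∑ i, ∑ j, α i * β j * (C i j)^2) := by
      rw [Finset.mul_sum, ← Finset.sum_add_distrib, ← Finset.sum_sub_distrib]
      apply Finset.sum_congr rfl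
      intro i _
      rw [Finset.mul_sum, ← Finset.sum_add_distrib, ← Finset.sum_sub_distrib]
      exact Finset.sum_congr rfl fun j _ => by ring
    rw [lhs, hrowsum (fun i => (α i)^2), hcolsum (fun j => (β j)^2), ← htrAB]
    have rhs : (A - B) * (A - B) = A * A - A * B - (B * A - B * B) := by
      rw [Matrix.sub_mul, Matrix.mul_sub, Matrix.mul_sub]
    rw [rhs, Matrix.trace_sub, Matrix.trace_sub, Matrix.trace_sub,
      htrA2, htrB2, Matrix.trace_mul_comm B A]
    ring
  -- assemble
  have hsplit : ∑ i, ∑ j, (C i j)^2 *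
      (α i * Real.log (α i) - α i * Real.log (β j) - α i + β j - (α i - β j)^2/2)
      = (∑ i, ∑ j, (C i j)^2 * (α i * Real.log (α i)))
        - (∑ i, ∑ j, (C i j)^2 * (α i * Real.log (β j)))
        - (∑ i, ∑ j, (C i j)^2 * α i) + (∑ i, ∑ j, (C i j)^2 * β j)
        - (∑ i, ∑ j, (C i j)^2 * (α i - β j)^2) / 2 := by
    simp only [mul_sub, mul_add, mul_div_assoc, Finset.sum_sub_distrib,
      Finset.sum_add_distrib, Finset.sum_div]
  rw [hsplit, e1, e2, e3, e4, e5] at hsum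
  linarith


/-- The quantum Jensen-Shannon divergence is bounded below by one eighth of the squared
Frobenius (Hilbert-Schmidt) norm of the difference of the density matrices. -/
theorem qjsd_ge_frobenius_sq {n : ℕ} {ρ σ : Matrix (Fin n) (Fin n) ℝ}
    (hρ : ρ.PosSemidef) (hσ : σ.PosSemidef) (hρ1 : ρ.trace = 1) (hσ1 : σ.trace = 1) :
    vonNeumannEntropy ((1 / 2 : ℝ) • (ρ + σ))
        - (1 / 2) * (vonNeumannEntropy ρ + vonNeumannEntropy σ) ≥
      (1 / 8) * ∑ i, ∑ j, (ρ i j - σ i j) ^ 2 := by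
  set m : Matrix (Fin n) (Fin n) ℝ := (1 / 2 : ℝ) • (ρ + σ) with hmdef
  have hm : m.PosSemidef := by
    refine Matrix.PosSemidef.of_dotProduct_mulVec_nonneg ?_ ?_
    · show mᴴ = m
      rw [hmdef, Matrix.conjTranspose_smul]
      rw [Matrix.conjTranspose_add, hρ.1.eq, hσ.1.eq]
      norm_num
    · intro x
      rw [hmdef, Matrix.smul_mulVec, dotProduct_smul]
      have := (hρ.add hσ).dotProduct_mulVec_nonneg x
      simp only [smul_eq_mul]
      positivity
  have hmt : m.trace = 1 := by
    rw [hmdef, Matrix.trace_smul, Matrix.trace_add, hρ1, hσ1]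
    norm_num
  have hmρ : (m + m - ρ).PosSemidef := by
    have : m + m - ρ = σ := by rw [hmdef]; module
    rw [this]; exact hσ
  have hmσ : (m + m - σ).PosSemidef := by
    have : m + m - σ = ρ := by rw [hmdef]; module
    rw [this]; exact hρ
  set V : Matrix (Fin n) (Fin n) ℝ := (hm.1.eigenvectorUnitary : Matrix (Fin n) (Fin n) ℝ)
    with hV
  set β := hm.1.eigenvalues with hβ
  have k1 := klein hρ hm hρ1 hmt hmρ
  have k2 := klein hσ hm hσ1 hmt hmσ
  -- sum of pinched diagonals
  have hVmV : star V * m * V = diagonal β := by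
    have := hm.1.conjStarAlgAut_star_eigenvectorUnitary
    rw [Unitary.conjStarAlgAut_star_apply] at this
    rwa [RCLike.ofReal_real_eq_id, Function.id_comp] at this
  have hsumd : ∀ j, (star V * ρ * V) j j + (star V * σ * V) j j = 2 * β j := by
    intro j
    have h1 : star V * ρ * V + star V * σ * V = diagonal β + diagonal β := by
      calc star V * ρ * V + star V * σ * V = star V * (ρ + σ) * V := by
            rw [Matrix.mul_add, Matrix.add_mul]
        _ = star V * (m + m) * V := by
            have hmm : ρ + σ = m + m := by rw [hmdef]; module
            rw [hmm]
        _ = star V * m * V + star V * m * V := by rw [Matrix.mul_add, Matrix.add_mul]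
        _ = diagonal β + diagonal β := by rw [hVmV]
    have := congrFun (congrFun h1 j) j
    simp only [Matrix.add_apply, Matrix.diagonal_apply_eq] at this
    linarith
  have hlogsum : ∑ j, (star V * ρ * V) j j * Real.log (β j)
      + ∑ j, (star V * σ * V) j j * Real.log (β j)
      = 2 * ∑ j, β j * Real.log (β j) := by
    rw [← Finset.sum_add_distrib, Finset.mul_sum]
    apply Finset.sum_congr rfl
    intro j _
    linear_combination Real.log (β j) * hsumd j
  -- Frobenius norm identity
  have hsym : ∀ i j, (ρ - σ) j i = (ρ - σ) i j := by
    intro i j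
    have h1 := congrFun (congrFun hρ.1.eq i) j
    have h2 := congrFun (congrFun hσ.1.eq i) j
    simp only [Matrix.conjTranspose_apply, star_trivial] at h1 h2
    simp only [Matrix.sub_apply]
    rw [h1, h2]
  have hF : ((ρ - σ) * (ρ - σ)).trace = ∑ i, ∑ j, (ρ i j - σ i j) ^ 2 := by
    rw [Matrix.trace]
    simp only [Matrix.diag, Matrix.mul_apply]
    apply Finset.sum_congr rfl
    intro i _
    apply Finset.sum_congr rfl
    intro j _
    rw [hsym i j]
    simp only [Matrix.sub_apply]
    ring
  have htr1 : ((ρ - m) * (ρ - m)).trace = (1/4) * ((ρ - σ) * (ρ - σ)).trace := by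
    have h1 : ρ - m = (1/2 : ℝ) • (ρ - σ) := by rw [hmdef]; module
    rw [h1, Matrix.smul_mul, Matrix.mul_smul, Matrix.trace_smul, Matrix.trace_smul]
    simp [smul_eq_mul]; ring
  have htr2 : ((σ - m) * (σ - m)).trace = (1/4) * ((ρ - σ) * (ρ - σ)).trace := by
    have h1 : σ - m = (-(1/2) : ℝ) • (ρ - σ) := by rw [hmdef]; module
    rw [h1, Matrix.smul_mul, Matrix.mul_smul, Matrix.trace_smul, Matrix.trace_smul]
    simp [smul_eq_mul]; ring
  -- unfold entropies
  simp only [vonNeumannEntropy]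
  rw [dif_pos hm.1, dif_pos hρ.1, dif_pos hσ.1]
  rw [htr1] at k1
  rw [htr2] at k2
  rw [hF] at k1 k2
  linarith [k1, k2, hlogsum]
end

section
/- Let N ≥ 1 and let K_Z be a 2N×2N real symmetric positive semidefinite matrix all of whose diagonal entries equal 1/(2N). Let A and B denote the top-left and bottom-right N×N diagonal blocks of K_Z, and set K_X = 2·A and K_Y = 2·B (each real symmetric positive semidefinite with trace 1). Let K_L be the 2N×2N matrix with (K_L)ᵢⱼ = 1/(2N) if i and j both lie in {1,…,N} or both lie in {N+1,…,2N}, and (K_L)ᵢⱼ = 0 otherwise. Then the representation Jensen–Shannon divergence equals the matrix-based mutual information between the mixture and the labels: S(K_Z) − (1/2)(S(K_X) + S(K_Y)) = S(K_Z) + S(K_L) − S((K_Z ⊙ K_L) / Tr(K_Z ⊙ K_L)), where ⊙ denotes the Hadamard (entrywise) product and Tr(K_Z ⊙ K_L) = 1/(2N) > 0. -/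
open Matrix Polynomial
open scoped Matrix

variable {n : Type*} [Fintype n] [DecidableEq n]

lemma charmatrix_diagonal' (d : n → ℝ) :
    charmatrix (diagonal d) = diagonal (fun i => (X : ℝ[X]) - C (d i)) := by
  ext i j
  by_cases h : i = j
  · subst h; simp [charmatrix_apply_eq]
  · rw [charmatrix_apply_ne _ _ _ h, diagonal_apply_ne _ h, diagonal_apply_ne _ h, map_zero,
      neg_zero]

lemma charpoly_conj' (U V M : Matrix n n ℝ) (hUV : U * V = 1) :
    (U * M * V).charpoly = M.charpoly := by
  have key : charmatrix (U * M * V) =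
      (C : ℝ →+* ℝ[X]).mapMatrix U * charmatrix M * (C : ℝ →+* ℝ[X]).mapMatrix V := by
    unfold charmatrix
    rw [mul_sub, sub_mul]
    congr 1
    · rw [← (scalar_commute (X : ℝ[X]) (fun r' => Commute.all _ _)
        ((C : ℝ →+* ℝ[X]).mapMatrix U)).eq, mul_assoc, ← _root_.map_mul, hUV, _root_.map_one, mul_one]
    · rw [_root_.map_mul, _root_.map_mul]
  have h1 : ((C : ℝ →+* ℝ[X]).mapMatrix U).det * ((C : ℝ →+* ℝ[X]).mapMatrix V).det = 1 := by
    rw [← det_mul, ← _root_.map_mul, hUV, _root_.map_one, det_one]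
  rw [Matrix.charpoly, key, det_mul, det_mul, mul_right_comm, h1, one_mul]
  rfl

lemma roots_charpoly_of_diag {M : Matrix n n ℝ} {U : Matrix n n ℝ} {d : n → ℝ}
    (hUV : U * star U = 1) (hM : M = U * diagonal d * star U) :
    M.charpoly.roots = Finset.univ.val.map d := by
  rw [hM, charpoly_conj' _ _ _ hUV, Matrix.charpoly, charmatrix_diagonal', det_diagonal]
  have : (∏ i, ((X : ℝ[X]) - C (d i))) =
      ((Finset.univ.val.map d).map fun a => (X : ℝ[X]) - C a).prod := by
    rw [Multiset.map_map]; rfl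
  rw [this, roots_multiset_prod_X_sub_C]

lemma roots_charpoly_herm {M : Matrix n n ℝ} (hM : M.IsHermitian) :
    M.charpoly.roots = Finset.univ.val.map hM.eigenvalues := by
  refine roots_charpoly_of_diag (U := (hM.eigenvectorUnitary : Matrix n n ℝ)) ?_ ?_
  · exact Matrix.mem_unitaryGroup_iff.mp hM.eigenvectorUnitary.2
  · have := hM.spectral_theorem
    simpa [RCLike.ofReal_real_eq_id] using this

lemma entropy_eq_roots {M : Matrix n n ℝ} (hM : M.IsHermitian) :
    vonNeumannEntropy M = -((M.charpoly.roots.map fun x => x * Real.log x).sum) := by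
  rw [vonNeumannEntropy, dif_pos hM, roots_charpoly_herm hM, Multiset.map_map]
  rfl

lemma entropy_fromBlocks {m : Type*} [Fintype m] [DecidableEq m]
    {A : Matrix n n ℝ} {B : Matrix m m ℝ} (hA : A.IsHermitian) (hB : B.IsHermitian)
    (hAB : (fromBlocks A 0 0 B).IsHermitian) :
    vonNeumannEntropy (fromBlocks A 0 0 B) = vonNeumannEntropy A + vonNeumannEntropy B := by
  rw [entropy_eq_roots hAB, entropy_eq_roots hA, entropy_eq_roots hB,
    Matrix.charpoly_fromBlocks_zero₁₂,
    Polynomial.roots_mul (mul_ne_zero A.charpoly_monic.ne_zero B.charpoly_monic.ne_zero),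
    Multiset.map_add, Multiset.sum_add]
  ring

lemma trace_eq_sum_eigs {M : Matrix n n ℝ} (hM : M.IsHermitian) :
    M.trace = ∑ i, hM.eigenvalues i := by
  have h := hM.spectral_theorem
  simp only [RCLike.ofReal_real_eq_id, Unitary.conjStarAlgAut_apply] at h
  conv_lhs => rw [h]
  rw [Matrix.trace_mul_cycle, Matrix.mem_unitaryGroup_iff'.mp hM.eigenvectorUnitary.2, one_mul,
    Matrix.trace_diagonal]
  rfl

lemma entropy_smul {M : Matrix n n ℝ} (hM : M.IsHermitian) {c : ℝ} (hc : 0 < c) :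
    vonNeumannEntropy (c • M) =
      c * vonNeumannEntropy M - c * Real.log c * M.trace := by
  have hcM : (c • M).IsHermitian := by
    unfold Matrix.IsHermitian at *
    rw [conjTranspose_smul, hM]
    simp
  have hroots : (c • M).charpoly.roots = Finset.univ.val.map (fun i => c * hM.eigenvalues i) := by
    refine roots_charpoly_of_diag (U := (hM.eigenvectorUnitary : Matrix n n ℝ)) ?_ ?_
    · exact Matrix.mem_unitaryGroup_iff.mp hM.eigenvectorUnitary.2
    · have h := hM.spectral_theorem
      simp only [RCLike.ofReal_real_eq_id, Unitary.conjStarAlgAut_apply] at h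
      have hd : (diagonal fun i => c * hM.eigenvalues i)
          = c • diagonal (id ∘ hM.eigenvalues) := by
        rw [← Matrix.diagonal_smul]
        congr 1
      conv_lhs => rw [h]
      rw [hd, Matrix.mul_smul, Matrix.smul_mul]
  rw [entropy_eq_roots hcM, entropy_eq_roots hM, hroots, Multiset.map_map,
    trace_eq_sum_eigs hM]
  have : ∀ i : n, (c * hM.eigenvalues i) * Real.log (c * hM.eigenvalues i) =
      c * (hM.eigenvalues i * Real.log (hM.eigenvalues i)) + (c * Real.log c) * hM.eigenvalues i := by
    intro i
    rcases eq_or_ne (hM.eigenvalues i) 0 with h0 | h0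
    · simp [h0]
    · rw [Real.log_mul hc.ne' h0]; ring
  have hrw : ((fun x => x * Real.log x) ∘ fun i => c * hM.eigenvalues i)
      = fun i => c * (hM.eigenvalues i * Real.log (hM.eigenvalues i))
        + (c * Real.log c) * hM.eigenvalues i := by
    funext i; exact this i
  show -(Multiset.map ((fun x => x * Real.log x) ∘ fun i => c * hM.eigenvalues i)
      Finset.univ.val).sum = _
  rw [hrw]
  have : (Multiset.map (fun i => c * (hM.eigenvalues i * Real.log (hM.eigenvalues i))
        + (c * Real.log c) * hM.eigenvalues i) Finset.univ.val).sum
      = ∑ i, (c * (hM.eigenvalues i * Real.log (hM.eigenvalues i))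
        + (c * Real.log c) * hM.eigenvalues i) := rfl
  have h2 : (Multiset.map (fun x => x * Real.log x) M.charpoly.roots).sum
      = ∑ i, hM.eigenvalues i * Real.log (hM.eigenvalues i) := by
    rw [roots_charpoly_herm hM, Multiset.map_map]; rfl
  rw [this, h2, Finset.sum_add_distrib, ← Finset.mul_sum, ← Finset.mul_sum]
  ring

lemma entropy_of_idempotent {M : Matrix n n ℝ} (hM : M.IsHermitian) (h : M * M = M) :
    vonNeumannEntropy M = 0 := by
  rw [vonNeumannEntropy, dif_pos hM]
  rw [neg_eq_zero]
  refine Finset.sum_eq_zero fun i _ => ?_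
  set lam := hM.eigenvalues i with hlam
  have hv := hM.mulVec_eigenvectorBasis i
  have hv2 : M *ᵥ (M *ᵥ ⇑(hM.eigenvectorBasis i)) = (lam * lam) • ⇑(hM.eigenvectorBasis i) := by
    rw [hv, Matrix.mulVec_smul, hv, smul_smul]
  rw [Matrix.mulVec_mulVec, h, hv] at hv2
  have hvne : ⇑(hM.eigenvectorBasis i) ≠ 0 := by
    have h1 := hM.eigenvectorBasis.orthonormal.1 i
    intro hcontra
    rw [show (hM.eigenvectorBasis i) = 0 from PiLp.ext fun j => congrFun hcontra j] at h1
    simp at h1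
  have hll : lam = lam * lam := by
    by_contra hne
    apply hvne
    have hsub := sub_eq_zero.mpr hv2
    rw [← sub_smul] at hsub
    have hs : lam - lam * lam ≠ 0 := sub_ne_zero.mpr hne
    have h3 : (lam - lam * lam) • (⇑(hM.eigenvectorBasis i) : n → ℝ) = (0 : n → ℝ) := hsub
    funext j
    have h4 : (lam - lam * lam) * (⇑(hM.eigenvectorBasis i) : n → ℝ) j = 0 := by
      simpa using congrFun h3 j
    simpa using (mul_eq_zero.mp h4).resolve_left hs
  rcases eq_or_ne lam 0 with h0 | h0
  · simp [h0]
  · have : lam = 1 :=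
      (mul_left_cancel₀ h0 (by rw [mul_one]; exact hll)).symm
    simp [this]

/-- The representation Jensen-Shannon divergence equals the matrix-based mutual information
between the mixture of the samples and the labels:
`S(K_Z) − (1/2)(S(K_X) + S(K_Y)) = S(K_Z) + S(K_L) − S((K_Z ⊙ K_L)/Tr(K_Z ⊙ K_L))`. -/
theorem repJSD_eq_matrixMutualInformation {N : ℕ} (hN : 1 ≤ N)
    (K_Z : Matrix (Fin N ⊕ Fin N) (Fin N ⊕ Fin N) ℝ)
    (hK_Z : K_Z.PosSemidef) (hdiag : ∀ i, K_Z i i = 1 / (2 * N))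
    (K_X K_Y : Matrix (Fin N) (Fin N) ℝ)
    (hK_X : K_X = (2 : ℝ) • K_Z.toBlocks₁₁) (hK_Y : K_Y = (2 : ℝ) • K_Z.toBlocks₂₂)
    (K_L : Matrix (Fin N ⊕ Fin N) (Fin N ⊕ Fin N) ℝ)
    (hK_L : K_L = Matrix.of fun i j =>
      if (i.isLeft = j.isLeft) then (1 : ℝ) / (2 * N) else 0) :
    vonNeumannEntropy K_Z - (1 / 2) * (vonNeumannEntropy K_X + vonNeumannEntropy K_Y) =
      vonNeumannEntropy K_Z + vonNeumannEntropy K_L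
        - vonNeumannEntropy ((1 / (K_Z ⊙ K_L).trace) • (K_Z ⊙ K_L)) := by
  have hNpos : (0:ℝ) < N := by
    have : 0 < N := hN
    exact_mod_cast this
  have hNne : (N:ℝ) ≠ 0 := hNpos.ne'
  have hHerm : K_Z.IsHermitian := hK_Z.1
  set A := K_Z.toBlocks₁₁ with hAdef
  set B := K_Z.toBlocks₂₂ with hBdef
  have hA : A.IsHermitian := by
    ext i j
    simpa [hAdef, Matrix.toBlocks₁₁] using congrFun (congrFun hHerm (Sum.inl i)) (Sum.inl j)
  have hB : B.IsHermitian := by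
    ext i j
    simpa [hBdef, Matrix.toBlocks₂₂] using congrFun (congrFun hHerm (Sum.inr i)) (Sum.inr j)
  have hKX : K_X.IsHermitian := by
    rw [hK_X]
    unfold Matrix.IsHermitian
    rw [conjTranspose_smul, hA]
    norm_num
  have hKY : K_Y.IsHermitian := by
    rw [hK_Y]
    unfold Matrix.IsHermitian
    rw [conjTranspose_smul, hB]
    norm_num
  -- the Hadamard product
  have hfb : K_Z ⊙ K_L = ((1:ℝ)/(2*N)) • fromBlocks A 0 0 B := by
    ext i j
    rcases i with i | i <;> rcases j with j | j <;>
      simp [hK_L, Matrix.hadamard, hAdef, hBdef, Matrix.toBlocks₁₁, Matrix.toBlocks₂₂,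
        Matrix.fromBlocks, mul_comm]
  have htr : (K_Z ⊙ K_L).trace = 1 / (2*N) := by
    have : ∀ i, (K_Z ⊙ K_L) i i = 1/(2*N) * (1/(2*N)) := by
      intro i
      simp [Matrix.hadamard, hK_L, hdiag i]
    rw [Matrix.trace]
    simp only [Matrix.diag, this]
    rw [Finset.sum_const, Finset.card_univ]
    simp only [Fintype.card_sum, Fintype.card_fin, nsmul_eq_mul]
    push_cast
    field_simp
    ring
  have hnorm : (1 / (K_Z ⊙ K_L).trace) • (K_Z ⊙ K_L) = fromBlocks A 0 0 B := by
    rw [htr, hfb, smul_smul]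
    have : (1 / (1 / (2*(N:ℝ)))) * ((1:ℝ)/(2*N)) = 1 := by field_simp
    rw [this, one_smul]
  -- entropies of the blocks
  have htrA : A.trace = 1/2 := by
    rw [Matrix.trace]
    simp only [Matrix.diag, hAdef, Matrix.toBlocks₁₁, Matrix.of_apply, hdiag]
    rw [Finset.sum_const, Finset.card_univ, Fintype.card_fin, nsmul_eq_mul]
    field_simp
  have htrB : B.trace = 1/2 := by
    rw [Matrix.trace]
    simp only [Matrix.diag, hBdef, Matrix.toBlocks₂₂, Matrix.of_apply, hdiag]
    rw [Finset.sum_const, Finset.card_univ, Fintype.card_fin, nsmul_eq_mul]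
    field_simp
  have hAX : A = (1/2 : ℝ) • K_X := by rw [hK_X, smul_smul]; norm_num
  have hBY : B = (1/2 : ℝ) • K_Y := by rw [hK_Y, smul_smul]; norm_num
  have htrKX : K_X.trace = 1 := by
    rw [hK_X, Matrix.trace_smul, htrA]; norm_num
  have htrKY : K_Y.trace = 1 := by
    rw [hK_Y, Matrix.trace_smul, htrB]; norm_num
  have hlog : Real.log (1/2 : ℝ) = - Real.log 2 := by
    rw [one_div, Real.log_inv]
  have hSA : vonNeumannEntropy A =
      (1/2) * vonNeumannEntropy K_X + (1/2) * Real.log 2 := by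
    rw [hAX, entropy_smul hKX (by norm_num : (0:ℝ) < 1/2), htrKX, hlog]
    ring
  have hSB : vonNeumannEntropy B =
      (1/2) * vonNeumannEntropy K_Y + (1/2) * Real.log 2 := by
    rw [hBY, entropy_smul hKY (by norm_num : (0:ℝ) < 1/2), htrKY, hlog]
    ring
  have hfbHerm : (fromBlocks A 0 0 B).IsHermitian := by
    rw [Matrix.isHermitian_fromBlocks_iff]
    refine ⟨hA, ?_, ?_, hB⟩ <;> simp
  have hSnorm : vonNeumannEntropy ((1 / (K_Z ⊙ K_L).trace) • (K_Z ⊙ K_L)) =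
      (1/2) * vonNeumannEntropy K_X + (1/2) * vonNeumannEntropy K_Y + Real.log 2 := by
    rw [hnorm, entropy_fromBlocks hA hB hfbHerm, hSA, hSB]
    ring
  -- entropy of K_L
  set P : Matrix (Fin N) (Fin N) ℝ := Matrix.of fun _ _ => (N:ℝ)⁻¹ with hPdef
  have hPH : P.IsHermitian := by
    ext i j; simp [hPdef]
  have hPidem : P * P = P := by
    ext i j
    simp [hPdef, Matrix.mul_apply]
    field_simp
  have hPtr : P.trace = 1 := by
    rw [Matrix.trace]
    simp only [Matrix.diag, hPdef, Matrix.of_apply]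
    rw [Finset.sum_const, Finset.card_univ, Fintype.card_fin, nsmul_eq_mul]
    field_simp
  have hSP : vonNeumannEntropy P = 0 := entropy_of_idempotent hPH hPidem
  set C0 : Matrix (Fin N) (Fin N) ℝ := (1/2 : ℝ) • P with hC0def
  have hC0H : C0.IsHermitian := by
    unfold Matrix.IsHermitian
    rw [hC0def, conjTranspose_smul, hPH]
    norm_num
  have hSC0 : vonNeumannEntropy C0 = (1/2) * Real.log 2 := by
    rw [hC0def, entropy_smul hPH (by norm_num : (0:ℝ) < 1/2), hSP, hPtr, hlog]
    ring
  have hKLfb : K_L = fromBlocks C0 0 0 C0 := by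
    ext i j
    rcases i with i | i <;> rcases j with j | j <;>
      simp [hK_L, hC0def, hPdef, Matrix.fromBlocks]
    · field_simp
    · field_simp
  have hKLHerm : (fromBlocks C0 0 0 C0).IsHermitian := by
    rw [Matrix.isHermitian_fromBlocks_iff]
    refine ⟨hC0H, ?_, ?_, hC0H⟩ <;> simp
  have hSKL : vonNeumannEntropy K_L = Real.log 2 := by
    rw [hKLfb, entropy_fromBlocks hC0H hC0H hKLHerm, hSC0]
    ring
  rw [hSnorm, hSKL]
  ring
end

section
/- Let X be a measurable space, P and Q probability measures on X, and φ : X → ℝ^D a measurable map with ‖φ(x)‖ = 1 for all x. Let κ(x,y) = ⟨φ(x), φ(y)⟩. Then the squared Frobenius norm of the difference of the covariance matrices equals the squared maximum mean discrepancy with kernel κ²: ∑_{i,j} ((C_P)ᵢⱼ − (C_Q)ᵢⱼ)² = ∫∫ κ(x,x')² dP(x)dP(x') − 2·∫∫ κ(x,y)² dP(x)dQ(y) + ∫∫ κ(y,y')² dQ(y)dQ(y'). -/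
open MeasureTheory Matrix
open scoped RealInnerProductSpace

/-- The uncentered covariance matrix of the feature map `φ` under the measure `P`:
`(C_P)ᵢⱼ = ∫ φ(x)ᵢ φ(x)ⱼ dP(x)`. -/
noncomputable def covMatrix {X : Type*} [MeasurableSpace X] (P : Measure X) {D : ℕ}
    (φ : X → EuclideanSpace ℝ (Fin D)) : Matrix (Fin D) (Fin D) ℝ :=
  Matrix.of fun i j => ∫ x, φ x i * φ x j ∂P

lemma aux_bound {D : ℕ} (u : EuclideanSpace ℝ (Fin D)) (hu : ‖u‖ = 1) (k : Fin D) :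
    |u k| ≤ 1 := by
  have h1 : ∑ m, (u m) ^ 2 = 1 := by
    have h2 : (1:ℝ) = Real.sqrt (∑ m, ‖u m‖ ^ 2) := hu ▸ EuclideanSpace.norm_eq u
    have h3 : ∑ m, ‖u m‖ ^ 2 = ∑ m, (u m) ^ 2 := by
      simp [Real.norm_eq_abs, sq_abs]
    nlinarith [Real.sq_sqrt (show (0:ℝ) ≤ ∑ m, ‖u m‖ ^ 2 by positivity)]
  have h4 : (u k) ^ 2 ≤ 1 := by
    rw [← h1]
    exact Finset.single_le_sum (fun m _ => sq_nonneg (u m)) (Finset.mem_univ k)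
  nlinarith [abs_nonneg (u k), sq_abs (u k)]

lemma aux_integrable {X : Type*} [MeasurableSpace X] (μ : Measure X)
    [IsProbabilityMeasure μ] {D : ℕ} (φ : X → EuclideanSpace ℝ (Fin D))
    (hφm : Measurable φ) (hφ : ∀ x, ‖φ x‖ = 1) (i j : Fin D) :
    Integrable (fun y => φ y i * φ y j) μ := by
  have hmeas : Measurable fun y => φ y i * φ y j :=
    ((measurable_pi_apply i).comp ((WithLp.measurable_ofLp _ _).comp hφm)).mul
      ((measurable_pi_apply j).comp ((WithLp.measurable_ofLp _ _).comp hφm))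
  refine (integrable_const (1:ℝ)).mono' hmeas.aestronglyMeasurable ?_
  filter_upwards with y
  have hi := aux_bound (φ y) (hφ y) i
  have hj := aux_bound (φ y) (hφ y) j
  have h : ‖φ y i * φ y j‖ = |φ y i| * |φ y j| := by
    simp [Real.norm_eq_abs, abs_mul]
  rw [h]
  nlinarith [abs_nonneg (φ y i), abs_nonneg (φ y j)]

lemma aux_key {X : Type*} [MeasurableSpace X] (μ ν : Measure X)
    [IsProbabilityMeasure μ] [IsProbabilityMeasure ν] {D : ℕ}
    (φ : X → EuclideanSpace ℝ (Fin D)) (hφm : Measurable φ) (hφ : ∀ x, ‖φ x‖ = 1) :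
    ∫ x, ∫ y, (⟪φ x, φ y⟫ : ℝ) ^ 2 ∂ν ∂μ =
      ∑ i, ∑ j, covMatrix μ φ i j * covMatrix ν φ i j := by
  have hinner : ∀ x y : X, (⟪φ x, φ y⟫ : ℝ) = ∑ i, φ x i * φ y i := by
    intro x y
    simp [PiLp.inner_apply, RCLike.inner_apply]
    exact Finset.sum_congr rfl fun i _ => mul_comm _ _
  have hin : ∀ x, ∫ y, (⟪φ x, φ y⟫ : ℝ) ^ 2 ∂ν =
      ∑ i, ∑ j, (φ x i * φ x j) * covMatrix ν φ i j := by
    intro x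
    have hexp : ∀ y, (⟪φ x, φ y⟫ : ℝ) ^ 2 =
        ∑ i, ∑ j, (φ x i * φ x j) * (φ y i * φ y j) := by
      intro y
      rw [hinner, sq, Finset.sum_mul_sum]
      exact Finset.sum_congr rfl fun i _ => Finset.sum_congr rfl fun j _ => by ring
    simp_rw [hexp]
    rw [integral_finset_sum _ (fun i _ => integrable_finset_sum _
      (fun j _ => ((aux_integrable ν φ hφm hφ i j).const_mul _)))]
    refine Finset.sum_congr rfl fun i _ => ?_
    rw [integral_finset_sum _ (fun j _ => ((aux_integrable ν φ hφm hφ i j).const_mul _))]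
    refine Finset.sum_congr rfl fun j _ => ?_
    rw [integral_const_mul]
    rfl
  simp_rw [hin]
  rw [integral_finset_sum _ (fun i _ => integrable_finset_sum _
    (fun j _ => ((aux_integrable μ φ hφm hφ i j).mul_const (covMatrix ν φ i j))))]
  refine Finset.sum_congr rfl fun i _ => ?_
  rw [integral_finset_sum _ (fun j _ => ((aux_integrable μ φ hφm hφ i j).mul_const (covMatrix ν φ i j)))]
  refine Finset.sum_congr rfl fun j _ => ?_
  rw [integral_mul_const]
  rfl

/-- The squared Frobenius norm of the difference of the covariance matrices equals the squared
maximum mean discrepancy with kernel `κ²`. -/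
theorem frobenius_sq_covMatrix_eq_MMD_sq {X : Type*} [MeasurableSpace X]
    (P Q : Measure X) [IsProbabilityMeasure P] [IsProbabilityMeasure Q] {D : ℕ}
    (φ : X → EuclideanSpace ℝ (Fin D)) (hφm : Measurable φ) (hφ : ∀ x, ‖φ x‖ = 1)
    (κ : X → X → ℝ) (hκ : ∀ x y, κ x y = ⟪φ x, φ y⟫) :
    ∑ i, ∑ j, (covMatrix P φ i j - covMatrix Q φ i j) ^ 2 =
      (∫ x, ∫ x', κ x x' ^ 2 ∂P ∂P) - 2 * (∫ x, ∫ y, κ x y ^ 2 ∂Q ∂P)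
        + (∫ y, ∫ y', κ y y' ^ 2 ∂Q ∂Q) := by
  simp_rw [hκ]
  rw [aux_key P P φ hφm hφ, aux_key P Q φ hφm hφ, aux_key Q Q φ hφm hφ,
    Finset.mul_sum]
  simp_rw [Finset.mul_sum]
  rw [← Finset.sum_sub_distrib, ← Finset.sum_add_distrib]
  refine Finset.sum_congr rfl fun i _ => ?_
  rw [← Finset.sum_sub_distrib, ← Finset.sum_add_distrib]
  exact Finset.sum_congr rfl fun j _ => by ring
end

section
/- Let X be a measurable space, P and Q probability measures on X, and φ : X → ℝ^D a measurable map with ‖φ(x)‖ = 1 for all x. Let κ(x,y) = ⟨φ(x), φ(y)⟩, and let C_P, C_Q be the uncentered covariance matrices of P and Q under φ. Then S((C_P + C_Q)/2) − (1/2)(S(C_P) + S(C_Q)) ≥ (1/8)·( ∫∫ κ(x,x')² dP(x)dP(x') − 2·∫∫ κ(x,y)² dP(x)dQ(y) + ∫∫ κ(y,y')² dQ(y)dQ(y') ). In particular, the representation Jensen–Shannon divergence is strictly positive whenever the maximum mean discrepancy of P and Q with kernel κ² is nonzero. -/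
open MeasureTheory Matrix
open scoped RealInnerProductSpace

/-! ### Auxiliary development -/

noncomputable def gfun (t : ℝ) : ℝ := Real.negMulLog t + t ^ 2 / 2

lemma hasDerivAt_gfun {x : ℝ} (hx : x ≠ 0) :
    HasDerivAt gfun (-Real.log x - 1 + x) x := by
  have h1 := Real.hasDerivAt_negMulLog hx
  have h2 : HasDerivAt (fun t : ℝ => t ^ 2 / 2) x x := by
    simpa using (hasDerivAt_pow 2 x).div_const 2
  exact h1.add h2

lemma concave_gfun : ConcaveOn ℝ (Set.Icc (0:ℝ) 1) gfun := by
  have hev : ∀ x ∈ Set.Ioo (0:ℝ) 1,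
      deriv gfun x = -Real.log x - 1 + x := fun x hx =>
    (hasDerivAt_gfun (ne_of_gt hx.1)).deriv
  apply concaveOn_of_deriv2_nonpos (convex_Icc 0 1)
  · exact (Real.continuous_negMulLog.add (by continuity)).continuousOn
  · intro x hx
    rw [interior_Icc] at hx
    exact (hasDerivAt_gfun (ne_of_gt hx.1)).differentiableAt.differentiableWithinAt
  · intro x hx
    rw [interior_Icc] at hx
    have heq : deriv gfun =ᶠ[nhds x] fun y => -Real.log y - 1 + y :=
      Filter.eventuallyEq_of_mem (isOpen_Ioo.mem_nhds hx) hev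
    have hd : HasDerivAt (fun y : ℝ => -Real.log y - 1 + y) (-x⁻¹ + 1) x := by
      exact (((Real.hasDerivAt_log (ne_of_gt hx.1)).neg.sub_const 1).add (hasDerivAt_id x))
    exact (hd.congr_of_eventuallyEq heq).differentiableAt.differentiableWithinAt
  · intro x hx
    rw [interior_Icc] at hx
    have heq : deriv gfun =ᶠ[nhds x] fun y => -Real.log y - 1 + y :=
      Filter.eventuallyEq_of_mem (isOpen_Ioo.mem_nhds hx) hev
    have hd : HasDerivAt (fun y : ℝ => -Real.log y - 1 + y) (-x⁻¹ + 1) x := by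
      exact (((Real.hasDerivAt_log (ne_of_gt hx.1)).neg.sub_const 1).add (hasDerivAt_id x))
    have h2 : deriv (deriv gfun) x = -x⁻¹ + 1 := by
      rw [Filter.EventuallyEq.deriv_eq heq]
      exact hd.deriv
    have h3 : deriv^[2] gfun x = -x⁻¹ + 1 := by
      simpa [Function.iterate_succ, Function.comp] using h2
    rw [h3]
    have : (1:ℝ) ≤ x⁻¹ := by
      rw [le_inv_comm₀]
      · simpa using hx.2.le
      · norm_num
      · exact hx.1
    linarith

section MatrixLemmas

variable {D : ℕ} {A : Matrix (Fin D) (Fin D) ℝ}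

private lemma conj_trace (V dd : Matrix (Fin D) (Fin D) ℝ) (hV : star V * V = 1) :
    (V * dd * star V).trace = dd.trace := by
  rw [trace_mul_cycle, hV, Matrix.one_mul]

private lemma conj_sq (V dd : Matrix (Fin D) (Fin D) ℝ) (hV : star V * V = 1) :
    (V * dd * star V) * (V * dd * star V) = V * (dd * dd) * star V := by
  calc (V * dd * star V) * (V * dd * star V)
      = V * dd * (star V * V) * dd * star V := by
        simp only [Matrix.mul_assoc]
    _ = V * (dd * dd) * star V := by rw [hV]; simp only [Matrix.mul_one, Matrix.mul_assoc]

lemma trace_eq_sum_eig (hA : A.IsHermitian) : A.trace = ∑ i, hA.eigenvalues i := by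
  calc A.trace = ((hA.eigenvectorUnitary : Matrix (Fin D) (Fin D) ℝ) *
        diagonal (RCLike.ofReal ∘ hA.eigenvalues) *
        star (hA.eigenvectorUnitary : Matrix (Fin D) (Fin D) ℝ)).trace :=
      congrArg _ hA.spectral_theorem
    _ = (diagonal (RCLike.ofReal ∘ hA.eigenvalues)).trace :=
      conj_trace _ _ (Unitary.coe_star_mul_self _)
    _ = ∑ i, hA.eigenvalues i := by rw [Matrix.trace_diagonal]; simp [Function.comp]

lemma trace_sq_eq_sum_eig_sq (hA : A.IsHermitian) :
    (A * A).trace = ∑ i, hA.eigenvalues i ^ 2 := by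
  calc (A * A).trace = (((hA.eigenvectorUnitary : Matrix (Fin D) (Fin D) ℝ) *
        diagonal (RCLike.ofReal ∘ hA.eigenvalues) *
        star (hA.eigenvectorUnitary : Matrix (Fin D) (Fin D) ℝ)) *
        ((hA.eigenvectorUnitary : Matrix (Fin D) (Fin D) ℝ) *
        diagonal (RCLike.ofReal ∘ hA.eigenvalues) *
        star (hA.eigenvectorUnitary : Matrix (Fin D) (Fin D) ℝ))).trace :=
      congrArg (fun X => (X * X).trace) hA.spectral_theorem
    _ = ((hA.eigenvectorUnitary : Matrix (Fin D) (Fin D) ℝ) *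
        (diagonal (RCLike.ofReal ∘ hA.eigenvalues) * diagonal (RCLike.ofReal ∘ hA.eigenvalues)) *
        star (hA.eigenvectorUnitary : Matrix (Fin D) (Fin D) ℝ)).trace := by
      rw [conj_sq _ _ (Unitary.coe_star_mul_self _)]
    _ = ∑ i, hA.eigenvalues i ^ 2 := by
      rw [conj_trace _ _ (Unitary.coe_star_mul_self _), diagonal_mul_diagonal,
        Matrix.trace_diagonal]
      simp [Function.comp, pow_two]

lemma trace_sq_eq_frob (hA : A.IsHermitian) :
    (A * A).trace = ∑ i, ∑ j, (A i j) ^ 2 := by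
  rw [Matrix.trace]
  congr 1; ext i
  rw [Matrix.diag, Matrix.mul_apply]
  congr 1; ext j
  have : A j i = A i j := by
    conv_lhs => rw [← hA]
    simp [conjTranspose_apply]
  rw [this, pow_two]

lemma toEuclideanLin_eigenBasis (hA : A.IsHermitian) (j : Fin D) :
    Matrix.toEuclideanLin A (hA.eigenvectorBasis j) =
      hA.eigenvalues j • hA.eigenvectorBasis j := by
  ext k
  have := congrFun (hA.mulVec_eigenvectorBasis j) k
  simpa [Matrix.toEuclideanLin_apply] using this

lemma quad_expand (hA : A.IsHermitian) (x : EuclideanSpace ℝ (Fin D)) :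
    ⟪x, Matrix.toEuclideanLin A x⟫ =
      ∑ j, hA.eigenvalues j * ⟪hA.eigenvectorBasis j, x⟫ ^ 2 := by
  have hTx : (Matrix.toEuclideanLin A) x =
      ∑ j, ⟪hA.eigenvectorBasis j, x⟫ • (hA.eigenvalues j • hA.eigenvectorBasis j) := by
    conv_lhs => rw [← hA.eigenvectorBasis.sum_repr' x]
    rw [map_sum]
    exact Finset.sum_congr rfl fun j _ => by
      rw [LinearMap.map_smul, toEuclideanLin_eigenBasis hA j]
  rw [hTx, inner_sum]
  refine Finset.sum_congr rfl fun j _ => ?_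
  rw [real_inner_smul_right, real_inner_smul_right, real_inner_comm x]
  ring

lemma parseval_unit {b : OrthonormalBasis (Fin D) ℝ (EuclideanSpace ℝ (Fin D))}
    {x : EuclideanSpace ℝ (Fin D)} (hx : ‖x‖ = 1) : ∑ j, ⟪b j, x⟫ ^ 2 = 1 := by
  have h := b.sum_inner_mul_inner x x
  rw [real_inner_self_eq_norm_sq, hx, one_pow] at h
  rw [← h]
  exact Finset.sum_congr rfl fun j _ => by rw [pow_two, real_inner_comm x (b j)]

lemma quad_mem (hA : A.IsHermitian) (h0 : ∀ j, hA.eigenvalues j ∈ Set.Icc (0:ℝ) 1)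
    {x : EuclideanSpace ℝ (Fin D)} (hx : ‖x‖ = 1) :
    ⟪x, Matrix.toEuclideanLin A x⟫ ∈ Set.Icc (0:ℝ) 1 := by
  rw [quad_expand hA x]
  constructor
  · exact Finset.sum_nonneg fun j _ => mul_nonneg (h0 j).1 (sq_nonneg _)
  · calc ∑ j, hA.eigenvalues j * ⟪hA.eigenvectorBasis j, x⟫ ^ 2
        ≤ ∑ j, ⟪hA.eigenvectorBasis j, x⟫ ^ 2 :=
        Finset.sum_le_sum fun j _ => by
          nth_rewrite 2 [← one_mul (⟪hA.eigenvectorBasis j, x⟫ ^ 2)]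
          exact mul_le_mul_of_nonneg_right (h0 j).2 (sq_nonneg _)
      _ = 1 := parseval_unit hx

lemma peierls (hA : A.IsHermitian) (h0 : ∀ j, hA.eigenvalues j ∈ Set.Icc (0:ℝ) 1)
    (v : OrthonormalBasis (Fin D) ℝ (EuclideanSpace ℝ (Fin D))) :
    ∑ j, gfun (hA.eigenvalues j) ≤ ∑ i, gfun (⟪v i, Matrix.toEuclideanLin A (v i)⟫) := by
  have key : ∀ i, ∑ j, ⟪hA.eigenvectorBasis j, v i⟫ ^ 2 * gfun (hA.eigenvalues j)
      ≤ gfun (⟪v i, Matrix.toEuclideanLin A (v i)⟫) := by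
    intro i
    rw [quad_expand hA (v i)]
    have := concave_gfun.le_map_sum (t := Finset.univ)
      (w := fun j => ⟪hA.eigenvectorBasis j, v i⟫ ^ 2) (p := fun j => hA.eigenvalues j)
      (fun j _ => sq_nonneg _) (parseval_unit (v.orthonormal.1 i)) (fun j _ => h0 j)
    simpa [smul_eq_mul, mul_comm] using this
  calc ∑ j, gfun (hA.eigenvalues j)
      = ∑ j, (∑ i, ⟪hA.eigenvectorBasis j, v i⟫ ^ 2) * gfun (hA.eigenvalues j) := by
        refine Finset.sum_congr rfl fun j _ => ?_
        have h1 : ∑ i, ⟪hA.eigenvectorBasis j, v i⟫ ^ 2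
            = ∑ i, ⟪v i, hA.eigenvectorBasis j⟫ ^ 2 :=
          Finset.sum_congr rfl fun i _ => by rw [real_inner_comm]
        rw [h1, parseval_unit (hA.eigenvectorBasis.orthonormal.1 j), one_mul]
    _ = ∑ i, ∑ j, ⟪hA.eigenvectorBasis j, v i⟫ ^ 2 * gfun (hA.eigenvalues j) := by
        rw [Finset.sum_comm]
        simp_rw [Finset.sum_mul]
    _ ≤ ∑ i, gfun (⟪v i, Matrix.toEuclideanLin A (v i)⟫) :=
        Finset.sum_le_sum fun i _ => key i

end MatrixLemmas

section EntropyGap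

variable {D : ℕ}

lemma vNE_eq {A : Matrix (Fin D) (Fin D) ℝ} (hA : A.IsHermitian) :
    vonNeumannEntropy A = ∑ j, Real.negMulLog (hA.eigenvalues j) := by
  rw [vonNeumannEntropy, dif_pos hA]
  simp [Real.negMulLog_eq_neg]

lemma eig_mem {A : Matrix (Fin D) (Fin D) ℝ} (hA : A.PosSemidef) (ht : A.trace = 1) :
    ∀ j, hA.1.eigenvalues j ∈ Set.Icc (0:ℝ) 1 := by
  intro j
  refine ⟨hA.eigenvalues_nonneg j, ?_⟩
  calc hA.1.eigenvalues j ≤ ∑ i, hA.1.eigenvalues i :=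
      Finset.single_le_sum (fun i _ => hA.eigenvalues_nonneg i) (Finset.mem_univ j)
    _ = 1 := by rw [← trace_eq_sum_eig hA.1, ht]

lemma gfun_sum_eq {A : Matrix (Fin D) (Fin D) ℝ} (hA : A.IsHermitian) :
    ∑ j, gfun (hA.eigenvalues j) =
      vonNeumannEntropy A + (1/2) * ∑ i, ∑ j, (A i j) ^ 2 := by
  rw [vNE_eq hA, ← trace_sq_eq_frob hA, trace_sq_eq_sum_eig_sq hA]
  simp only [gfun, Finset.sum_add_distrib, Finset.mul_sum]
  congr 1
  exact Finset.sum_congr rfl fun j _ => by ring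

lemma entropy_gap {A B : Matrix (Fin D) (Fin D) ℝ} (hA : A.PosSemidef) (hB : B.PosSemidef)
    (htA : A.trace = 1) (htB : B.trace = 1) :
    vonNeumannEntropy ((1/2:ℝ) • (A + B)) - (1/2) * (vonNeumannEntropy A + vonNeumannEntropy B)
      ≥ (1/8) * ∑ i, ∑ j, (A i j - B i j) ^ 2 := by
  set M : Matrix (Fin D) (Fin D) ℝ := (1/2:ℝ) • (A + B) with hMdef
  have hM : M.IsHermitian := by
    rw [Matrix.IsHermitian, hMdef, Matrix.conjTranspose_smul, hA.1.add hB.1]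
    norm_num
  set v := hM.eigenvectorBasis with hvdef
  set a : Fin D → ℝ := fun i => ⟪v i, Matrix.toEuclideanLin A (v i)⟫ with hadef
  set b : Fin D → ℝ := fun i => ⟪v i, Matrix.toEuclideanLin B (v i)⟫ with hbdef
  have hvnorm : ∀ i, ‖v i‖ = 1 := fun i => v.orthonormal.1 i
  have hamem : ∀ i, a i ∈ Set.Icc (0:ℝ) 1 := fun i =>
    quad_mem hA.1 (eig_mem hA htA) (hvnorm i)
  have hbmem : ∀ i, b i ∈ Set.Icc (0:ℝ) 1 := fun i =>
    quad_mem hB.1 (eig_mem hB htB) (hvnorm i)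
  have hμ : ∀ i, hM.eigenvalues i = (1/2:ℝ) * a i + (1/2:ℝ) * b i := by
    intro i
    have h1 : ⟪v i, Matrix.toEuclideanLin M (v i)⟫ = hM.eigenvalues i := by
      rw [hvdef, toEuclideanLin_eigenBasis hM i, real_inner_smul_right,
        real_inner_self_eq_norm_sq, hvnorm i]
      norm_num
    rw [← h1, hMdef]
    rw [LinearEquiv.map_smul, LinearEquiv.map_add]
    simp only [LinearMap.smul_apply, LinearMap.add_apply]
    rw [real_inner_smul_right, inner_add_right]
    rw [hadef, hbdef]
    ring
  have step1 : ∑ i, gfun (hM.eigenvalues i) ≥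
      (1/2) * ∑ j, gfun (hA.1.eigenvalues j) + (1/2) * ∑ j, gfun (hB.1.eigenvalues j) := by
    have h2 : ∑ i, gfun (hM.eigenvalues i) ≥
        (1/2) * ∑ i, gfun (a i) + (1/2) * ∑ i, gfun (b i) := by
      rw [Finset.mul_sum, Finset.mul_sum, ← Finset.sum_add_distrib]
      refine Finset.sum_le_sum fun i _ => ?_
      have := concave_gfun.2 (hamem i) (hbmem i)
        (by norm_num : (0:ℝ) ≤ 1/2) (by norm_num : (0:ℝ) ≤ 1/2) (by norm_num)
      rw [hμ i]
      simpa [smul_eq_mul] using this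
    have hpa := peierls hA.1 (eig_mem hA htA) v
    have hpb := peierls hB.1 (eig_mem hB htB) v
    have : ∑ i, gfun (a i) ≥ ∑ j, gfun (hA.1.eigenvalues j) := hpa
    nlinarith [hpa, hpb, h2]
  rw [gfun_sum_eq hM, gfun_sum_eq hA.1, gfun_sum_eq hB.1] at step1
  have hMentry : ∀ i j, M i j = (A i j + B i j) / 2 := by
    intro i j
    rw [hMdef]
    simp [Matrix.smul_apply, Matrix.add_apply]
    ring
  have hId : (1/8) * ∑ i, ∑ j, (A i j - B i j) ^ 2 =
      (1/4) * (∑ i, ∑ j, (A i j) ^ 2) + (1/4) * (∑ i, ∑ j, (B i j) ^ 2)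
        - (1/2) * (∑ i, ∑ j, (M i j) ^ 2) := by
    have key : ∀ i j, (1/8) * (A i j - B i j) ^ 2 =
        (1/4) * (A i j) ^ 2 + (1/4) * (B i j) ^ 2 - (1/2) * (M i j) ^ 2 := by
      intro i j
      rw [hMentry i j]
      ring
    calc (1/8) * ∑ i, ∑ j, (A i j - B i j) ^ 2
        = ∑ i, ∑ j, ((1/4) * (A i j) ^ 2 + (1/4) * (B i j) ^ 2 - (1/2) * (M i j) ^ 2) := by
          rw [Finset.mul_sum]
          refine Finset.sum_congr rfl fun i _ => ?_
          rw [Finset.mul_sum]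
          exact Finset.sum_congr rfl fun j _ => key i j
      _ = _ := by
          simp only [Finset.sum_add_distrib, Finset.sum_sub_distrib, ← Finset.mul_sum]
  rw [ge_iff_le, hId]
  linarith [step1]

end EntropyGap

section CovMatrix

variable {X : Type*} [MeasurableSpace X] {D : ℕ} {φ : X → EuclideanSpace ℝ (Fin D)}

lemma meas_coord (hφm : Measurable φ) (i : Fin D) : Measurable fun x => φ x i := by
  have hc : Continuous fun y : EuclideanSpace ℝ (Fin D) => y i :=
    (continuous_apply i).comp (PiLp.continuous_ofLp 2 fun _ : Fin D => ℝ)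
  exact hc.measurable.comp hφm

lemma abs_coord_le (hφ : ∀ x, ‖φ x‖ = 1) (x : X) (i : Fin D) : |φ x i| ≤ 1 := by
  have h1 : ⟪EuclideanSpace.single i (1:ℝ), φ x⟫ = φ x i := by
    rw [EuclideanSpace.inner_single_left]
    simp
  calc |φ x i| = |⟪EuclideanSpace.single i (1:ℝ), φ x⟫| := by rw [h1]
    _ ≤ ‖EuclideanSpace.single i (1:ℝ)‖ * ‖φ x‖ := abs_real_inner_le_norm _ _
    _ = 1 := by rw [EuclideanSpace.norm_single, hφ x]; simp

lemma integrable_coord_mul (hφm : Measurable φ) (hφ : ∀ x, ‖φ x‖ = 1)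
    (μ : Measure X) [IsProbabilityMeasure μ] (i j : Fin D) :
    Integrable (fun x => φ x i * φ x j) μ := by
  refine Integrable.mono' (integrable_const 1)
    (((meas_coord hφm i).mul (meas_coord hφm j)).aestronglyMeasurable)
    (Filter.Eventually.of_forall fun x => ?_)
  rw [Real.norm_eq_abs, abs_mul]
  calc |φ x i| * |φ x j| ≤ 1 * 1 :=
    mul_le_mul (abs_coord_le hφ x i) (abs_coord_le hφ x j) (abs_nonneg _) zero_le_one
  _ = 1 := by norm_num

lemma inner_φ_eq (x y : X) : (⟪φ x, φ y⟫ : ℝ) = ∑ i, φ x i * φ y i := by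
  rw [PiLp.inner_apply]
  exact Finset.sum_congr rfl fun i _ => by simp [mul_comm]

lemma cov_herm (μ : Measure X) : (covMatrix μ φ).IsHermitian := by
  ext i j
  simp only [conjTranspose_apply, covMatrix, Matrix.of_apply, star_trivial]
  exact integral_congr_ae (Filter.Eventually.of_forall fun x => mul_comm _ _)

lemma cov_trace (hφm : Measurable φ) (hφ : ∀ x, ‖φ x‖ = 1)
    (μ : Measure X) [IsProbabilityMeasure μ] : (covMatrix μ φ).trace = 1 := by
  rw [Matrix.trace]
  have h1 : ∀ i, (covMatrix μ φ).diag i = ∫ x, φ x i * φ x i ∂μ := fun i => rfl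
  simp_rw [h1]
  rw [← integral_finset_sum _ fun i _ => integrable_coord_mul hφm hφ μ i i]
  have h2 : ∀ x : X, ∑ i, φ x i * φ x i = 1 := by
    intro x
    have := inner_φ_eq (φ := φ) x x
    rw [real_inner_self_eq_norm_sq, hφ x] at this
    rw [← this]; norm_num
  simp_rw [h2]
  simp

lemma cov_psd (hφm : Measurable φ) (hφ : ∀ x, ‖φ x‖ = 1)
    (μ : Measure X) [IsProbabilityMeasure μ] : (covMatrix μ φ).PosSemidef := by
  refine .of_dotProduct_mulVec_nonneg (cov_herm μ) fun z => ?_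
  have key : dotProduct (star z) (covMatrix μ φ *ᵥ z) = ∫ x, (∑ i, z i * φ x i) ^ 2 ∂μ := by
    have hint : ∀ x : X, (∑ i, z i * φ x i) ^ 2
        = ∑ i, ∑ j, (z i * z j) * (φ x i * φ x j) := by
      intro x
      rw [pow_two, Finset.sum_mul_sum]
      exact Finset.sum_congr rfl fun i _ => Finset.sum_congr rfl fun j _ => by ring
    simp_rw [hint]
    rw [integral_finset_sum _ fun i _ => integrable_finset_sum _ fun j _ =>
      (integrable_coord_mul hφm hφ μ i j).const_mul _]
    simp_rw [integral_finset_sum _ fun j (_ : j ∈ Finset.univ) =>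
      (integrable_coord_mul hφm hφ μ _ j).const_mul _]
    simp_rw [MeasureTheory.integral_const_mul]
    simp only [star_trivial, dotProduct, mulVec, dotProduct, covMatrix, Matrix.of_apply]
    rw [Finset.sum_congr rfl fun i (_ : i ∈ Finset.univ) => Finset.mul_sum _ _ _]
    exact Finset.sum_congr rfl fun i _ => Finset.sum_congr rfl fun j _ => by ring
  rw [key]
  exact integral_nonneg fun x => sq_nonneg _

lemma double_integral_eq (hφm : Measurable φ) (hφ : ∀ x, ‖φ x‖ = 1)
    (μ ν : Measure X) [IsProbabilityMeasure μ] [IsProbabilityMeasure ν] :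
    ∫ x, ∫ y, (⟪φ x, φ y⟫ : ℝ) ^ 2 ∂ν ∂μ
      = ∑ i, ∑ j, covMatrix μ φ i j * covMatrix ν φ i j := by
  have hin : ∀ x y : X, (⟪φ x, φ y⟫ : ℝ) ^ 2
      = ∑ i, ∑ j, (φ x i * φ x j) * (φ y i * φ y j) := by
    intro x y
    rw [inner_φ_eq, pow_two, Finset.sum_mul_sum]
    exact Finset.sum_congr rfl fun i _ => Finset.sum_congr rfl fun j _ => by ring
  have hstep : ∀ x : X, ∫ y, (⟪φ x, φ y⟫ : ℝ) ^ 2 ∂ν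
      = ∑ i, ∑ j, (φ x i * φ x j) * covMatrix ν φ i j := by
    intro x
    simp_rw [hin x]
    rw [integral_finset_sum _ fun i _ => integrable_finset_sum _ fun j _ =>
      (integrable_coord_mul hφm hφ ν i j).const_mul _]
    simp_rw [integral_finset_sum _ fun j (_ : j ∈ Finset.univ) =>
      (integrable_coord_mul hφm hφ ν _ j).const_mul _]
    simp_rw [MeasureTheory.integral_const_mul]
    rfl
  simp_rw [hstep]
  rw [integral_finset_sum _ fun i _ => integrable_finset_sum _ fun j _ =>
    (integrable_coord_mul hφm hφ μ i j).mul_const (covMatrix ν φ i j)]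
  simp_rw [integral_finset_sum _ fun j (_ : j ∈ Finset.univ) =>
    (integrable_coord_mul hφm hφ μ _ j).mul_const _]
  simp_rw [MeasureTheory.integral_mul_const]
  rfl

end CovMatrix
/-- The representation Jensen-Shannon divergence is bounded below by one eighth of the
squared maximum mean discrepancy of `P` and `Q` with kernel `κ²`; in particular it is
strictly positive whenever this maximum mean discrepancy is nonzero. -/
theorem repJSD_ge_MMD_sq {X : Type*} [MeasurableSpace X]
    (P Q : Measure X) [IsProbabilityMeasure P] [IsProbabilityMeasure Q] {D : ℕ}
    (φ : X → EuclideanSpace ℝ (Fin D)) (hφm : Measurable φ) (hφ : ∀ x, ‖φ x‖ = 1)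
    (κ : X → X → ℝ) (hκ : ∀ x y, κ x y = ⟪φ x, φ y⟫) :
    (vonNeumannEntropy ((1 / 2 : ℝ) • (covMatrix P φ + covMatrix Q φ))
        - (1 / 2) * (vonNeumannEntropy (covMatrix P φ) + vonNeumannEntropy (covMatrix Q φ)) ≥
      (1 / 8) * ((∫ x, ∫ x', κ x x' ^ 2 ∂P ∂P) - 2 * (∫ x, ∫ y, κ x y ^ 2 ∂Q ∂P)
          + (∫ y, ∫ y', κ y y' ^ 2 ∂Q ∂Q))) ∧
    (((∫ x, ∫ x', κ x x' ^ 2 ∂P ∂P) - 2 * (∫ x, ∫ y, κ x y ^ 2 ∂Q ∂P)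
          + (∫ y, ∫ y', κ y y' ^ 2 ∂Q ∂Q)) ≠ 0 →
      0 < vonNeumannEntropy ((1 / 2 : ℝ) • (covMatrix P φ + covMatrix Q φ))
        - (1 / 2) * (vonNeumannEntropy (covMatrix P φ) + vonNeumannEntropy (covMatrix Q φ))) := by
  have hκ2 : ∀ x y, κ x y ^ 2 = (⟪φ x, φ y⟫ : ℝ) ^ 2 := fun x y => by rw [hκ]
  have hPP : ∫ x, ∫ x', κ x x' ^ 2 ∂P ∂P
      = ∑ i, ∑ j, covMatrix P φ i j * covMatrix P φ i j := by
    simp_rw [hκ2]; exact double_integral_eq hφm hφ P P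
  have hPQ : ∫ x, ∫ y, κ x y ^ 2 ∂Q ∂P
      = ∑ i, ∑ j, covMatrix P φ i j * covMatrix Q φ i j := by
    simp_rw [hκ2]; exact double_integral_eq hφm hφ P Q
  have hQQ : ∫ y, ∫ y', κ y y' ^ 2 ∂Q ∂Q
      = ∑ i, ∑ j, covMatrix Q φ i j * covMatrix Q φ i j := by
    simp_rw [hκ2]; exact double_integral_eq hφm hφ Q Q
  have hT : (∫ x, ∫ x', κ x x' ^ 2 ∂P ∂P) - 2 * (∫ x, ∫ y, κ x y ^ 2 ∂Q ∂P)
        + (∫ y, ∫ y', κ y y' ^ 2 ∂Q ∂Q)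
      = ∑ i, ∑ j, (covMatrix P φ i j - covMatrix Q φ i j) ^ 2 := by
    rw [hPP, hPQ, hQQ]
    rw [show ∑ i, ∑ j, (covMatrix P φ i j - covMatrix Q φ i j) ^ 2
        = ∑ i, ∑ j, (covMatrix P φ i j * covMatrix P φ i j
          - 2 * (covMatrix P φ i j * covMatrix Q φ i j)
          + covMatrix Q φ i j * covMatrix Q φ i j) from
      Finset.sum_congr rfl fun i _ => Finset.sum_congr rfl fun j _ => by ring]
    simp only [Finset.sum_add_distrib, Finset.sum_sub_distrib, ← Finset.mul_sum]
  have hgap := entropy_gap (cov_psd hφm hφ P) (cov_psd hφm hφ Q)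
    (cov_trace hφm hφ P) (cov_trace hφm hφ Q)
  constructor
  · rw [hT]
    exact hgap
  · intro hne
    have hnonneg : 0 ≤ (∫ x, ∫ x', κ x x' ^ 2 ∂P ∂P) - 2 * (∫ x, ∫ y, κ x y ^ 2 ∂Q ∂P)
        + (∫ y, ∫ y', κ y y' ^ 2 ∂Q ∂Q) := by
      rw [hT]
      exact Finset.sum_nonneg fun i _ => Finset.sum_nonneg fun j _ => sq_nonneg _
    have hpos : (0:ℝ) < (∫ x, ∫ x', κ x x' ^ 2 ∂P ∂P) - 2 * (∫ x, ∫ y, κ x y ^ 2 ∂Q ∂P)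
        + (∫ y, ∫ y', κ y y' ^ 2 ∂Q ∂Q) := lt_of_le_of_ne hnonneg (Ne.symm hne)
    have h8 := hgap
    rw [← hT] at h8
    linarith
end

section
/- Let N, M ≥ 1 be natural numbers, let π₁ = N/(N+M) and π₂ = M/(N+M), and let ρ and σ be n×n real symmetric positive semidefinite matrices with trace 1. Then the weighted representation Jensen–Shannon divergence is bounded: S(π₁·ρ + π₂·σ) − (π₁·S(ρ) + π₂·S(σ)) ≤ log((N+M)/√(N·M)). -/
open Matrix

section QJSDProofAux
open scoped RealInnerProductSpace
open scoped MatrixOrder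


namespace QJSDAux

lemma transpose_eq_self {m : Type*} [Fintype m] {A : Matrix m m ℝ} (hA : A.IsHermitian) :
    Aᵀ = A := by
  ext i j
  have := congrFun (congrFun hA i) j
  simpa [Matrix.conjTranspose_apply] using this

lemma symm_dot {m : Type*} [Fintype m] {A : Matrix m m ℝ} (hA : A.IsHermitian) (x y : m → ℝ) :
    (A *ᵥ x) ⬝ᵥ y = x ⬝ᵥ (A *ᵥ y) := by
  rw [Matrix.dotProduct_mulVec, ← Matrix.mulVec_transpose, transpose_eq_self hA]

lemma inner_euc {m : Type*} [Fintype m] (x y : EuclideanSpace ℝ m) :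
    ⟪x, y⟫ = (⇑x) ⬝ᵥ (⇑y) := by
  simp [PiLp.inner_apply, dotProduct, mul_comm]

lemma sum_eigenvalues_eq_trace {m : Type*} [Fintype m] [DecidableEq m]
    {A : Matrix m m ℝ} (hA : A.IsHermitian) :
    ∑ i, hA.eigenvalues i = A.trace := by
  rw [hA.trace_eq_sum_eigenvalues]
  simp

lemma jensen_sub {ι : Type*} [Fintype ι] (t μ : ι → ℝ) (ht0 : ∀ i, 0 ≤ t i)
    (ht1 : ∑ i, t i ≤ 1) (hμ : ∀ i, 0 ≤ μ i) :
    ∑ i, t i * Real.negMulLog (μ i) ≤ Real.negMulLog (∑ i, t i * μ i) := by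
  classical
  have h := Real.concaveOn_negMulLog.le_map_sum (t := (Finset.univ : Finset (Option ι)))
    (w := fun o => o.elim (1 - ∑ i, t i) t) (p := fun o => o.elim 0 μ)
    (by rintro (_|i) _
        · simpa using ht1
        · exact ht0 i)
    (by rw [Fintype.sum_option]; simp)
    (by rintro (_|i) _
        · exact Set.mem_Ici.2 le_rfl
        · exact Set.mem_Ici.2 (hμ i))
  rw [Fintype.sum_option, Fintype.sum_option] at h
  simpa using h

lemma core {n : ℕ} {ρ σ : Matrix (Fin n) (Fin n) ℝ} (hρ : ρ.PosSemidef) (hσ : σ.PosSemidef)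
    (hρ1 : ρ.trace = 1) (hσ1 : σ.trace = 1) {p q : ℝ} (hp : 0 ≤ p) (hq : 0 ≤ q)
    (hpq : p + q = 1) (hτ : (p • ρ + q • σ).PosSemidef) :
    ∑ j, Real.negMulLog (hτ.1.eigenvalues j) ≤
      ∑ k, Real.negMulLog (p * hρ.1.eigenvalues k)
        + ∑ l, Real.negMulLog (q * hσ.1.eigenvalues l) := by
  classical
  set μ : Fin n → ℝ := hτ.1.eigenvalues with hμdef
  set v := hτ.1.eigenvectorBasis with hvdef
  set a : Fin n → ℝ := hρ.1.eigenvalues with hadef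
  set u := hρ.1.eigenvectorBasis with hudef
  set b : Fin n → ℝ := hσ.1.eigenvalues with hbdef
  set x := hσ.1.eigenvectorBasis with hxdef
  set Rm := CFC.sqrt ρ with hRmdef
  set Sm := CFC.sqrt σ with hSmdef
  have hRmH : Rm.IsHermitian := (CFC.sqrt_nonneg ρ).posSemidef.1
  have hSmH : Sm.IsHermitian := (CFC.sqrt_nonneg σ).posSemidef.1
  have hμ0 : ∀ j, 0 ≤ μ j := fun j => hτ.eigenvalues_nonneg j
  have hpp : Real.sqrt p * Real.sqrt p = p := Real.mul_self_sqrt hp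
  have hqq : Real.sqrt q * Real.sqrt q = q := Real.mul_self_sqrt hq
  have obd : ∀ (bs : OrthonormalBasis (Fin n) ℝ (EuclideanSpace ℝ (Fin n))) (k k' : Fin n),
      (⇑(bs k)) ⬝ᵥ (⇑(bs k')) = if k = k' then (1:ℝ) else 0 := fun bs k k' => by
    rw [← inner_euc]; exact orthonormal_iff_ite.mp bs.orthonormal k k'
  -- the big Euclidean space
  let E : Type := EuclideanSpace ℝ (Fin n ⊕ Fin n)
  let g : Fin n → E := fun j =>
    WithLp.toLp 2 (Sum.elim (Real.sqrt p • (Rm *ᵥ ⇑(v j))) (Real.sqrt q • (Sm *ᵥ ⇑(v j))) : Fin n ⊕ Fin n → ℝ)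
  let w : Fin n ⊕ Fin n → E := Sum.elim
    (fun k => WithLp.toLp 2 (Sum.elim (⇑(u k)) (0 : Fin n → ℝ) : Fin n ⊕ Fin n → ℝ))
    (fun l => WithLp.toLp 2 (Sum.elim (0 : Fin n → ℝ) (⇑(x l)) : Fin n ⊕ Fin n → ℝ))
  let c : Fin n ⊕ Fin n → ℝ := Sum.elim (fun k => p * a k) (fun l => q * b l)
  have hinner : ∀ y z : E, ⟪y, z⟫ = ∑ s, y s * z s := by
    intro y z
    simp [E, PiLp.inner_apply, mul_comm]
  -- inner products of the g's
  have hgg : ∀ i j, ⟪g i, g j⟫ = if i = j then μ j else 0 := by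
    intro i j
    rw [hinner]
    have step1 : ∑ s, g i s * g j s
        = p * ((Rm *ᵥ ⇑(v i)) ⬝ᵥ (Rm *ᵥ ⇑(v j))) + q * ((Sm *ᵥ ⇑(v i)) ⬝ᵥ (Sm *ᵥ ⇑(v j))) := by
      rw [Fintype.sum_sum_type]
      simp only [g, PiLp.toLp_apply, Sum.elim_inl, Sum.elim_inr, Pi.smul_apply, smul_eq_mul, dotProduct,
        Finset.mul_sum]
      congr 1 <;> refine Finset.sum_congr rfl fun s _ => ?_
      · linear_combination ((Rm *ᵥ ⇑(v i)) s * (Rm *ᵥ ⇑(v j)) s) * hpp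
      · linear_combination ((Sm *ᵥ ⇑(v i)) s * (Sm *ᵥ ⇑(v j)) s) * hqq
    rw [step1, symm_dot hRmH, symm_dot hSmH, Matrix.mulVec_mulVec, Matrix.mulVec_mulVec,
      CFC.sqrt_mul_sqrt_self ρ hρ.nonneg, CFC.sqrt_mul_sqrt_self σ hσ.nonneg]
    have hτv := hτ.1.mulVec_eigenvectorBasis j
    have step2 : p * (⇑(v i) ⬝ᵥ (ρ *ᵥ ⇑(v j))) + q * (⇑(v i) ⬝ᵥ (σ *ᵥ ⇑(v j)))
        = ⇑(v i) ⬝ᵥ ((p • ρ + q • σ) *ᵥ ⇑(v j)) := by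
      rw [Matrix.add_mulVec, dotProduct_add, Matrix.smul_mulVec,
        Matrix.smul_mulVec, dotProduct_smul, dotProduct_smul]
      simp
    rw [step2, hτv, dotProduct_smul, smul_eq_mul, obd v i j]
    split <;> simp [hμdef]
  have hg0 : ∀ j, μ j = 0 → g j = 0 := by
    intro j hj
    have : ⟪g j, g j⟫ = 0 := by rw [hgg]; simp [hj]
    exact inner_self_eq_zero.mp this
  -- orthonormality of w
  have hw_on : Orthonormal ℝ w := by
    rw [orthonormal_iff_ite]
    rintro (k | l) (k' | l') <;>
      · rw [hinner, Fintype.sum_sum_type]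
        simp only [w, PiLp.toLp_apply, Sum.elim_inl, Sum.elim_inr, Pi.zero_apply, zero_mul, mul_zero,
          Finset.sum_const_zero, add_zero, zero_add]
        first
        | (have := obd u k k'; simp only [dotProduct] at this; rw [this]; simp)
        | (have := obd x l l'; simp only [dotProduct] at this; rw [this]; simp)
        | simp
  -- Parseval: ∑_j ⟪w s, g j⟫² = c s
  have hQc : ∀ s : Fin n ⊕ Fin n, ∑ j, ⟪w s, g j⟫ ^ 2 = c s := by
    have key : ∀ (z : EuclideanSpace ℝ (Fin n)), ∑ j, ⟪z, v j⟫ ^ 2 = ⟪z, z⟫ := by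
      intro z
      have h2 := v.sum_inner_mul_inner z z
      calc ∑ j, ⟪z, v j⟫ ^ 2 = ∑ j, ⟪z, v j⟫ * ⟪v j, z⟫ := by
            refine Finset.sum_congr rfl fun j _ => ?_
            rw [real_inner_comm (v j) z]; ring
        _ = ⟪z, z⟫ := h2
    rintro (k | l)
    · let zz : EuclideanSpace ℝ (Fin n) := WithLp.toLp 2 (Real.sqrt p • (Rm *ᵥ ⇑(u k)))
      have hwz : ∀ j, ⟪w (Sum.inl k), g j⟫ = ⟪zz, v j⟫ := by
        intro j
        rw [hinner, Fintype.sum_sum_type, inner_euc]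
        simp only [w, g, PiLp.toLp_apply, Sum.elim_inl, Sum.elim_inr, Pi.zero_apply, zero_mul,
          Finset.sum_const_zero, add_zero, Pi.smul_apply, smul_eq_mul]
        show _ = (Real.sqrt p • (Rm *ᵥ ⇑(u k))) ⬝ᵥ ⇑(v j)
        rw [smul_dotProduct, smul_eq_mul, symm_dot hRmH]
        simp only [dotProduct, Finset.mul_sum]
        exact Finset.sum_congr rfl fun s _ => by ring
      simp only [hwz]
      rw [key, inner_euc]
      show (Real.sqrt p • (Rm *ᵥ ⇑(u k))) ⬝ᵥ (Real.sqrt p • (Rm *ᵥ ⇑(u k))) = c (Sum.inl k)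
      rw [smul_dotProduct, dotProduct_smul, smul_eq_mul, smul_eq_mul,
        symm_dot hRmH, Matrix.mulVec_mulVec, CFC.sqrt_mul_sqrt_self ρ hρ.nonneg,
        hρ.1.mulVec_eigenvectorBasis k, dotProduct_smul, smul_eq_mul]
      have huu := obd u k k
      rw [if_pos rfl] at huu
      rw [huu]
      show _ = p * a k
      linear_combination (a k) * hpp
    · let zz : EuclideanSpace ℝ (Fin n) := WithLp.toLp 2 (Real.sqrt q • (Sm *ᵥ ⇑(x l)))
      have hwz : ∀ j, ⟪w (Sum.inr l), g j⟫ = ⟪zz, v j⟫ := by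
        intro j
        rw [hinner, Fintype.sum_sum_type, inner_euc]
        simp only [w, g, PiLp.toLp_apply, Sum.elim_inl, Sum.elim_inr, Pi.zero_apply, zero_mul,
          Finset.sum_const_zero, zero_add, Pi.smul_apply, smul_eq_mul]
        show _ = (Real.sqrt q • (Sm *ᵥ ⇑(x l))) ⬝ᵥ ⇑(v j)
        rw [smul_dotProduct, smul_eq_mul, symm_dot hSmH]
        simp only [dotProduct, Finset.mul_sum]
        exact Finset.sum_congr rfl fun s _ => by ring
      simp only [hwz]
      rw [key, inner_euc]
      show (Real.sqrt q • (Sm *ᵥ ⇑(x l))) ⬝ᵥ (Real.sqrt q • (Sm *ᵥ ⇑(x l))) = c (Sum.inr l)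
      rw [smul_dotProduct, dotProduct_smul, smul_eq_mul, smul_eq_mul,
        symm_dot hSmH, Matrix.mulVec_mulVec, CFC.sqrt_mul_sqrt_self σ hσ.nonneg,
        hσ.1.mulVec_eigenvectorBasis l, dotProduct_smul, smul_eq_mul]
      have hxx := obd x l l
      rw [if_pos rfl] at hxx
      rw [hxx]
      show _ = q * b l
      linear_combination (b l) * hqq
  -- normalized g's form an orthonormal family on the support of μ
  let e : {j // μ j ≠ 0} → E := fun j => (Real.sqrt (μ j))⁻¹ • g j
  have he_on : Orthonormal ℝ e := by
    rw [orthonormal_iff_ite]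
    rintro ⟨i, hi⟩ ⟨j, hj⟩
    simp only [e, real_inner_smul_left, real_inner_smul_right, hgg]
    rcases eq_or_ne i j with rfl | hij
    · rw [if_pos rfl]
      rw [if_pos rfl]
      have hμj : 0 < μ i := lt_of_le_of_ne (hμ0 i) (Ne.symm hi)
      have hs : Real.sqrt (μ i) ≠ 0 := ne_of_gt (Real.sqrt_pos.mpr hμj)
      field_simp
      rw [Real.sq_sqrt (hμ0 i)]
    · rw [if_neg hij, if_neg (show ¬(⟨i, hi⟩ : {j // μ j ≠ 0}) = ⟨j, hj⟩ from
        fun hh => hij (by injection hh))]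
      simp
  -- transfer coefficients
  set Q : Fin n ⊕ Fin n → Fin n → ℝ := fun s j => ⟪w s, g j⟫ ^ 2 with hQdef
  set t : Fin n ⊕ Fin n → Fin n → ℝ := fun s j => Q s j / μ j with htdef
  have hQ0 : ∀ s j, 0 ≤ Q s j := fun s j => sq_nonneg _
  have ht0 : ∀ s j, 0 ≤ t s j := fun s j => div_nonneg (hQ0 s j) (hμ0 j)
  have hQz : ∀ s j, μ j = 0 → Q s j = 0 := by
    intro s j hj
    simp [hQdef, hg0 j hj]
  have htμ : ∀ s j, t s j * μ j = Q s j := by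
    intro s j
    rcases eq_or_ne (μ j) 0 with hj | hj
    · simp [htdef, hj, hQz s j hj]
    · exact div_mul_cancel₀ (Q s j) hj
  have hQe : ∀ (s : Fin n ⊕ Fin n) (j : {j // μ j ≠ 0}), t s (↑j) = ‖⟪e j, w s⟫‖ ^ 2 := by
    intro s j
    have hμj : 0 < μ (↑j) := lt_of_le_of_ne (hμ0 _) (Ne.symm j.2)
    have h1 : ⟪e j, w s⟫ = (Real.sqrt (μ (↑j)))⁻¹ * ⟪w s, g (↑j)⟫ := by
      simp only [e, real_inner_smul_left]
      rw [real_inner_comm]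
    rw [Real.norm_eq_abs, sq_abs, h1, mul_pow, inv_pow, Real.sq_sqrt (le_of_lt hμj)]
    simp only [htdef, hQdef]
    ring
  -- row sums
  have hrow : ∀ s, ∑ j, t s j ≤ 1 := by
    intro s
    have hb := he_on.sum_inner_products_le (x := w s)
      (s := (Finset.univ : Finset {j // μ j ≠ 0}))
    have hws : ‖w s‖ = 1 := hw_on.1 s
    have h2 : ∑ j, t s j = ∑ j : {j // μ j ≠ 0}, t s (↑j) := by
      rw [← Finset.sum_subtype (Finset.univ.filter fun j => μ j ≠ 0) (by simp) (t s)]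
      refine (Finset.sum_subset (Finset.filter_subset _ _) fun j _ hj => ?_).symm
      have : μ j = 0 := by simpa using hj
      simp [htdef, hQz s j this]
    rw [h2]
    calc ∑ j : {j // μ j ≠ 0}, t s (↑j) = ∑ j : {j // μ j ≠ 0}, ‖⟪e j, w s⟫‖ ^ 2 :=
          Finset.sum_congr rfl fun j _ => hQe s j
      _ ≤ ‖w s‖ ^ 2 := hb
      _ = 1 := by rw [hws]; norm_num
  -- column sums
  have hcol_le : ∀ (j : Fin n) (hj : μ j ≠ 0), ∑ s, t s j ≤ 1 := by
    intro j hj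
    have hb := hw_on.sum_inner_products_le (x := e ⟨j, hj⟩)
      (s := (Finset.univ : Finset (Fin n ⊕ Fin n)))
    have hen : ‖e ⟨j, hj⟩‖ = 1 := he_on.1 _
    calc ∑ s, t s j = ∑ s, ‖⟪w s, e ⟨j, hj⟩⟫‖ ^ 2 := by
          refine Finset.sum_congr rfl fun s _ => ?_
          rw [hQe s ⟨j, hj⟩, real_inner_comm]
      _ ≤ ‖e ⟨j, hj⟩‖ ^ 2 := hb
      _ = 1 := by rw [hen]; norm_num
  -- total sums
  have hasum : ∑ k, a k = 1 := by rw [hadef, sum_eigenvalues_eq_trace hρ.1, hρ1]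
  have hbsum : ∑ l, b l = 1 := by rw [hbdef, sum_eigenvalues_eq_trace hσ.1, hσ1]
  have hμsum : ∑ j, μ j = 1 := by
    rw [hμdef, sum_eigenvalues_eq_trace hτ.1, Matrix.trace_add, Matrix.trace_smul,
      Matrix.trace_smul, hρ1, hσ1]
    simpa using hpq
  have hcsum : ∑ s, c s = 1 := by
    rw [Fintype.sum_sum_type]
    simp only [c, Sum.elim_inl, Sum.elim_inr]
    rw [← Finset.mul_sum, ← Finset.mul_sum, hasum, hbsum]
    simpa using hpq
  have htot : ∑ j, (∑ s, t s j) * μ j = 1 := by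
    calc ∑ j, (∑ s, t s j) * μ j = ∑ j, ∑ s, t s j * μ j :=
          Finset.sum_congr rfl fun j _ => Finset.sum_mul ..
      _ = ∑ s, ∑ j, t s j * μ j := Finset.sum_comm
      _ = ∑ s, ∑ j, Q s j := by
          refine Finset.sum_congr rfl fun s _ => Finset.sum_congr rfl fun j _ => htμ s j
      _ = ∑ s, c s := Finset.sum_congr rfl fun s _ => hQc s
      _ = 1 := hcsum
  have hcol1 : ∀ j, μ j ≠ 0 → ∑ s, t s j = 1 := by
    have hzero : ∑ j, (1 - ∑ s, t s j) * μ j = 0 := by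
      have : ∑ j, (1 - ∑ s, t s j) * μ j = ∑ j, μ j - ∑ j, (∑ s, t s j) * μ j := by
        rw [← Finset.sum_sub_distrib]
        exact Finset.sum_congr rfl fun j _ => by ring
      rw [this, hμsum, htot, sub_self]
    have hnn : ∀ j ∈ Finset.univ, 0 ≤ (1 - ∑ s, t s j) * μ j := by
      intro j _
      rcases eq_or_ne (μ j) 0 with h | h
      · simp [h]
      · exact mul_nonneg (by linarith [hcol_le j h]) (hμ0 j)
    intro j hj
    have := (Finset.sum_eq_zero_iff_of_nonneg hnn).mp hzero j (Finset.mem_univ j)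
    rcases mul_eq_zero.mp this with h | h
    · linarith
    · exact absurd h hj
  -- main chain
  calc ∑ j, Real.negMulLog (μ j)
      = ∑ j, (∑ s, t s j) * Real.negMulLog (μ j) := by
        refine Finset.sum_congr rfl fun j _ => ?_
        rcases eq_or_ne (μ j) 0 with h | h
        · simp [h]
        · rw [hcol1 j h, one_mul]
    _ = ∑ s, ∑ j, t s j * Real.negMulLog (μ j) := by
        rw [← Finset.sum_comm]
        exact Finset.sum_congr rfl fun j _ => Finset.sum_mul ..
    _ ≤ ∑ s, Real.negMulLog (∑ j, t s j * μ j) :=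
        Finset.sum_le_sum fun s _ => jensen_sub (t s) μ (ht0 s) (hrow s) hμ0
    _ = ∑ s, Real.negMulLog (c s) := by
        refine Finset.sum_congr rfl fun s _ => ?_
        congr 1
        rw [Finset.sum_congr rfl fun j _ => htμ s j, hQc s]
    _ = ∑ k, Real.negMulLog (p * a k) + ∑ l, Real.negMulLog (q * b l) := by
        rw [Fintype.sum_sum_type]
        simp only [c, Sum.elim_inl, Sum.elim_inr]

end QJSDAux

namespace QJSDAux2
open QJSDAux

lemma psd_smul {n : ℕ} {A : Matrix (Fin n) (Fin n) ℝ} (hA : A.PosSemidef) {c : ℝ}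
    (hc : 0 ≤ c) : (c • A).PosSemidef := by
  constructor
  · show (c • A)ᴴ = c • A
    rw [Matrix.conjTranspose_smul, hA.1]
    simp
  · intro y
    exact (hA.smul hc).2 y

lemma entropy_smul_sum {n : ℕ} (p : ℝ) (a : Fin n → ℝ) (ha : ∑ k, a k = 1) :
    ∑ k, Real.negMulLog (p * a k) = Real.negMulLog p + p * ∑ k, Real.negMulLog (a k) := by
  have : ∀ k, Real.negMulLog (p * a k)
      = a k * Real.negMulLog p + p * Real.negMulLog (a k) := fun k => Real.negMulLog_mul p (a k)
  rw [Finset.sum_congr rfl fun k _ => this k, Finset.sum_add_distrib, ← Finset.sum_mul,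
    ← Finset.mul_sum, ha, one_mul]

lemma scalar_bound {N M : ℕ} (hN : 1 ≤ N) (hM : 1 ≤ M) :
    Real.negMulLog ((N : ℝ) / (N + M)) + Real.negMulLog ((M : ℝ) / (N + M)) ≤
      Real.log ((N + M : ℝ) / Real.sqrt ((N : ℝ) * M)) := by
  have hN0 : (0:ℝ) < N := by exact_mod_cast hN
  have hM0 : (0:ℝ) < M := by exact_mod_cast hM
  have hNM : (0:ℝ) < (N:ℝ) + M := by linarith
  have hsq : (0:ℝ) < Real.sqrt ((N:ℝ) * M) := Real.sqrt_pos.mpr (by positivity)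
  rw [Real.log_div (ne_of_gt hNM) (ne_of_gt hsq), Real.log_sqrt (by positivity),
    Real.log_mul (ne_of_gt hN0) (ne_of_gt hM0)]
  rw [Real.negMulLog, Real.negMulLog, Real.log_div (ne_of_gt hN0) (ne_of_gt hNM),
    Real.log_div (ne_of_gt hM0) (ne_of_gt hNM)]
  set LN := Real.log N
  set LM := Real.log M
  set LT := Real.log ((N:ℝ) + M)
  have key : 0 ≤ ((N:ℝ) - M) * (LN - LM) := by
    rcases le_total (N:ℝ) (M:ℝ) with h | h
    · have h1 : (N:ℝ) - M ≤ 0 := by linarith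
      have h2 : LN - LM ≤ 0 := by have := Real.log_le_log hN0 h; linarith
      nlinarith [mul_nonneg (neg_nonneg.mpr h1) (neg_nonneg.mpr h2)]
    · exact mul_nonneg (by linarith) (by
        have := Real.log_le_log hM0 h; linarith)
  have expand : -((N:ℝ)/((N:ℝ)+M)) * (LN - LT) + -((M:ℝ)/((N:ℝ)+M)) * (LM - LT)
      = LT - ((N:ℝ)*LN + (M:ℝ)*LM)/((N:ℝ)+M) := by
    field_simp
    ring
  rw [expand]
  have h2 : (LN + LM)/2 ≤ ((N:ℝ)*LN + (M:ℝ)*LM)/((N:ℝ)+M) := by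
    rw [div_le_div_iff₀ (by norm_num) hNM]
    nlinarith [key]
  linarith

end QJSDAux2

end QJSDProofAux

open QJSDAux QJSDAux2 in
/-- Boundedness of the weighted representation Jensen-Shannon divergence:
`S(π₁ρ + π₂σ) - (π₁ S(ρ) + π₂ S(σ)) ≤ log((N+M)/√(NM))`. -/
theorem qjsd_le_log {N M : ℕ} (hN : 1 ≤ N) (hM : 1 ≤ M)
    {n : ℕ} {ρ σ : Matrix (Fin n) (Fin n) ℝ}
    (hρ : ρ.PosSemidef) (hσ : σ.PosSemidef) (hρ1 : ρ.trace = 1) (hσ1 : σ.trace = 1) :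
    vonNeumannEntropy (((N : ℝ) / (N + M)) • ρ + ((M : ℝ) / (N + M)) • σ)
        - (((N : ℝ) / (N + M)) * vonNeumannEntropy ρ
            + ((M : ℝ) / (N + M)) * vonNeumannEntropy σ) ≤
      Real.log ((N + M : ℝ) / Real.sqrt (N * M)) := by
  have hN0 : (0:ℝ) < N := by exact_mod_cast hN
  have hM0 : (0:ℝ) < M := by exact_mod_cast hM
  have hNM : (0:ℝ) < (N:ℝ) + M := by linarith
  set p : ℝ := (N : ℝ) / (N + M) with hpdef
  set q : ℝ := (M : ℝ) / (N + M) with hqdef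
  have hp : 0 ≤ p := by positivity
  have hq : 0 ≤ q := by positivity
  have hpq : p + q = 1 := by
    rw [hpdef, hqdef, ← add_div, div_self (ne_of_gt hNM)]
  have hτ : (p • ρ + q • σ).PosSemidef := (psd_smul hρ hp).add (psd_smul hσ hq)
  have hasum : ∑ k, hρ.1.eigenvalues k = 1 := (sum_eigenvalues_eq_trace hρ.1).trans hρ1
  have hbsum : ∑ l, hσ.1.eigenvalues l = 1 := (sum_eigenvalues_eq_trace hσ.1).trans hσ1
  have hcore := core hρ hσ hρ1 hσ1 hp hq hpq hτ
  rw [entropy_smul_sum p _ hasum, entropy_smul_sum q _ hbsum] at hcore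
  have hscalar := scalar_bound hN hM
  have conv1 : ∀ {m : ℕ} (f : Fin m → ℝ),
      -∑ i, f i * Real.log (f i) = ∑ i, Real.negMulLog (f i) := by
    intro m f
    rw [← Finset.sum_neg_distrib]
    exact Finset.sum_congr rfl fun i _ => by simp [Real.negMulLog]
  unfold vonNeumannEntropy
  rw [dif_pos hτ.1, dif_pos hρ.1, dif_pos hσ.1, conv1, conv1, conv1]
  linarith [hcore, hscalar]
end
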